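/- arXiv:1803.00351 — 5 statements merged into one kernel-verified Lean document; each statement's English description precedes it below -/
import Mathlib

section
/- An operator T: X → Y between Banach spaces is p-convergent (1 < p < ∞) if and only if for every operator S: ℓ_{p*} → X (where p* is the conjugate exponent of p), the composition T∘S is compact. -/
open Filter Topology Metric NormedSpace Bornology ENNReal

noncomputable section

section Defs
variable {X Y : Type*} [NormedAddCommGroup X] [NormedSpace ℝ X]
  [NormedAddCommGroup Y] [NormedSpace ℝ Y]

/-- A sequence `x` in `X` is weakly `p`-summable if `(f (x n))ₙ ∈ ℓ_p` for every
continuous linear functional `f`. -/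
def WeaklyPSummable (p : ℝ≥0∞) (x : ℕ → X) : Prop :=
  ∀ f : StrongDual ℝ X, Memℓp (fun n => f (x n)) p

/-- A sequence is norm null if its norms tend to `0`. -/
def NormNull (x : ℕ → X) : Prop :=
  Tendsto (fun n => ‖x n‖) atTop (𝓝 0)

/-- An operator is `p`-convergent if it maps weakly `p`-summable sequences to norm
null sequences. -/
def PConvergent (p : ℝ≥0∞) (T : X →L[ℝ] Y) : Prop :=
  ∀ x : ℕ → X, WeaklyPSummable p x → NormNull fun n => T (x n)

/-- The adjoint (dual) operator `T* : Y* → X*`, `g ↦ g ∘ T`. -/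
def adjOp (T : X →L[ℝ] Y) : StrongDual ℝ Y →L[ℝ] StrongDual ℝ X :=
  (ContinuousLinearMap.compL ℝ X Y ℝ).flip T

/-- Weak convergence of a sequence to a point. -/
def WeaklyConvTo (x : ℕ → X) (a : X) : Prop :=
  ∀ f : StrongDual ℝ X, Tendsto (fun n => f (x n)) atTop (𝓝 (f a))

/-- A sequence is weakly Cauchy if `(f (x n))` converges for every functional `f`. -/
def WeaklyCauchySeq (x : ℕ → X) : Prop :=
  ∀ f : StrongDual ℝ X, ∃ l : ℝ, Tendsto (fun n => f (x n)) atTop (𝓝 l)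

/-- A set is relatively weakly compact iff every sequence in it has a subsequence
weakly convergent to a point of the space (sequential form, by Eberlein–Šmulian). -/
def RelWeaklyCompact (A : Set X) : Prop :=
  ∀ x : ℕ → X, (∀ n, x n ∈ A) →
    ∃ (a : X) (φ : ℕ → ℕ), StrictMono φ ∧ WeaklyConvTo (fun k => x (φ k)) a

/-- A set is weakly precompact if every sequence in it has a weakly Cauchy subsequence. -/
def WeaklyPrecompact (A : Set X) : Prop :=
  ∀ x : ℕ → X, (∀ n, x n ∈ A) →
    ∃ φ : ℕ → ℕ, StrictMono φ ∧ WeaklyCauchySeq (fun k => x (φ k))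

/-- A weakly compact operator: the image of the closed unit ball is relatively
weakly compact. -/
def WeaklyCompactOp (T : X →L[ℝ] Y) : Prop :=
  RelWeaklyCompact (⇑T '' closedBall 0 1)

/-- A weakly precompact operator: the image of the closed unit ball is weakly
precompact. -/
def WeaklyPrecompactOp (T : X →L[ℝ] Y) : Prop :=
  WeaklyPrecompact (⇑T '' closedBall 0 1)

/-- `g n → 0` uniformly on `A`. -/
def UnifNullOn (g : ℕ → X → ℝ) (A : Set X) : Prop :=
  ∀ ε > (0 : ℝ), ∃ N, ∀ n ≥ N, ∀ a ∈ A, |g n a| ≤ ε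

/-- A weakly-`p`-Dunford-Pettis subset of `X`: bounded, and every weakly `p`-summable
sequence in `X*` tends to `0` uniformly on it. -/
def WeaklyPDP (p : ℝ≥0∞) (A : Set X) : Prop :=
  IsBounded A ∧
    ∀ f : ℕ → StrongDual ℝ X, WeaklyPSummable p f → UnifNullOn (fun n a => f n a) A

/-- A weakly-`p`-L-subset of `X*`: bounded, and every weakly `p`-summable sequence
in `X` tends to `0` uniformly on it. -/
def WeaklyPLSet (p : ℝ≥0∞) (A : Set (StrongDual ℝ X)) : Prop :=
  IsBounded A ∧
    ∀ x : ℕ → X, WeaklyPSummable p x → UnifNullOn (fun n g => g (x n)) A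

/-- A weakly-`p`-Cauchy sequence. -/
def WeaklyPCauchy (p : ℝ≥0∞) (x : ℕ → X) : Prop :=
  ∀ φ ψ : ℕ → ℕ, StrictMono φ → StrictMono ψ →
    WeaklyPSummable p fun k => x (φ k) - x (ψ k)

/-- A weakly-`p`-precompact set: every sequence in it has a weakly-`p`-Cauchy
subsequence. -/
def WeaklyPPrecompact (p : ℝ≥0∞) (A : Set X) : Prop :=
  ∀ x : ℕ → X, (∀ n, x n ∈ A) →
    ∃ φ : ℕ → ℕ, StrictMono φ ∧ WeaklyPCauchy p fun k => x (φ k)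

/-- A weakly-`p`-precompact operator. -/
def WeaklyPPrecompactOp (p : ℝ≥0∞) (T : X →L[ℝ] Y) : Prop :=
  WeaklyPPrecompact p (⇑T '' closedBall 0 1)

/-- A `w*`-null sequence of functionals. -/
def WStarNull (f : ℕ → StrongDual ℝ X) : Prop :=
  ∀ x : X, Tendsto (fun n => f n x) atTop (𝓝 0)

/-- A limited subset of `X`: every `w*`-null sequence in `X*` tends to `0`
uniformly on it. -/
def LimitedSet (A : Set X) : Prop :=
  ∀ f : ℕ → StrongDual ℝ X, WStarNull f → UnifNullOn (fun n a => f n a) A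

/-- A weakly unconditionally convergent (wuc) series. -/
def WUC (x : ℕ → X) : Prop :=
  ∀ f : StrongDual ℝ X, Summable fun n => |f (x n)|

/-- An unconditionally converging operator: maps wuc series to unconditionally
convergent series. -/
def UncondConverging (T : X →L[ℝ] Y) : Prop :=
  ∀ x : ℕ → X, WUC x → Summable fun n => T (x n)

/-- A `V*`-subset of `X`. -/
def VStarSet (A : Set X) : Prop :=
  IsBounded A ∧ ∀ f : ℕ → StrongDual ℝ X, WUC f → UnifNullOn (fun n a => f n a) A

/-- `w*`-to-`w` continuity of an operator `T : X* → Y`, in the equivalent algebraic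
form: for every `g ∈ Y*` the functional `g ∘ T` on `X*` is given by evaluation at
a point of `X`. -/
def WStarToWCont (T : StrongDual ℝ X →L[ℝ] Y) : Prop :=
  ∀ g : StrongDual ℝ Y, ∃ x : X, ∀ f : StrongDual ℝ X, g (T f) = f x

end Defs

section SpaceProps
variable (p : ℝ≥0∞) (X : Type*) [NormedAddCommGroup X] [NormedSpace ℝ X]

/-- The Gelfand-Phillips property: every limited subset is relatively compact. -/
def GPspace : Prop :=
  ∀ A : Set X, Bornology.IsBounded A → LimitedSet A → IsCompact (closure A)

/-- The `p`-Gelfand-Phillips property: every limited weakly `p`-summable sequence is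
norm null. -/
def pGP : Prop :=
  ∀ x : ℕ → X, LimitedSet (Set.range x) → WeaklyPSummable p x → NormNull x

/-- Property `RDP_p`: every weakly-`p`-L-subset of `X*` is relatively weakly compact. -/
def RDPp : Prop :=
  ∀ A : Set (StrongDual ℝ X), WeaklyPLSet p A → RelWeaklyCompact A

/-- The Schur property. -/
def SchurSpace : Prop :=
  ∀ (x : ℕ → X) (a : X), WeaklyConvTo x a → Tendsto x atTop (𝓝 a)

/-- Weak sequential completeness. -/
def WeaklySeqComplete : Prop :=
  ∀ x : ℕ → X, WeaklyCauchySeq x → ∃ a : X, WeaklyConvTo x a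

/-- Pełczyński's property (V). -/
def PropertyV : Prop :=
  ∀ (Y : Type) [NormedAddCommGroup Y] [NormedSpace ℝ Y] [CompleteSpace Y],
    ∀ T : X →L[ℝ] Y, UncondConverging T → WeaklyCompactOp T

/-- Property (V*). -/
def PropertyVStar : Prop :=
  ∀ A : Set X, VStarSet A → RelWeaklyCompact A

/-- Reflexivity of a normed space: the canonical embedding into the double dual is
surjective. -/
def ReflexiveSpace : Prop :=
  Function.Surjective (NormedSpace.inclusionInDoubleDual ℝ X)

end SpaceProps

section Embeds
/-- `Z` embeds isomorphically into `W`. -/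
def EmbedsIn (Z W : Type*) [NormedAddCommGroup Z] [NormedSpace ℝ Z]
    [NormedAddCommGroup W] [NormedSpace ℝ W] : Prop :=
  ∃ f : Z →L[ℝ] W, ∃ c > (0 : ℝ), ∀ z : Z, c * ‖z‖ ≤ ‖f z‖

end Embeds
namespace Stmt0Aux


def head (q : ℝ≥0∞) (n : ℕ) (a : lp (fun _ : ℕ => ℝ) q) : lp (fun _ : ℕ => ℝ) q :=
  ∑ i ∈ Finset.range n, lp.single q i (a i)

lemma head_apply (q : ℝ≥0∞) (n : ℕ) (a : lp (fun _ : ℕ => ℝ) q) (j : ℕ) :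
    (head q n a : ℕ → ℝ) j = if j < n then a j else 0 := by
  simp only [head, lp.coeFn_sum, Finset.sum_apply, lp.single_apply, Pi.single_apply, Finset.sum_ite_eq, Finset.sum_ite_eq',
    Finset.mem_range]

section headlem
variable {q : ℝ≥0∞} (hq : 0 < q.toReal)
include hq

lemma norm_head_le (n : ℕ) (a : lp (fun _ : ℕ => ℝ) q) : ‖head q n a‖ ≤ ‖a‖ := by
  rw [← Real.rpow_le_rpow_iff (lp.norm_nonneg' _) (lp.norm_nonneg' _) hq]
  rw [head, lp.norm_sum_single hq]
  exact lp.sum_rpow_le_norm_rpow hq a _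

lemma norm_sub_head_le (n : ℕ) (a : lp (fun _ : ℕ => ℝ) q) : ‖a - head q n a‖ ≤ ‖a‖ := by
  rw [← Real.rpow_le_rpow_iff (lp.norm_nonneg' _) (lp.norm_nonneg' _) hq]
  rw [head, lp.norm_compl_sum_single hq]
  have : 0 ≤ ∑ i ∈ Finset.range n, ‖(a : ℕ → ℝ) i‖ ^ q.toReal :=
    Finset.sum_nonneg fun i _ => Real.rpow_nonneg (norm_nonneg _) _
  linarith

end headlem

lemma tendsto_head {q : ℝ≥0∞} [Fact (1 ≤ q)] (hq' : q ≠ ⊤) (a : lp (fun _ : ℕ => ℝ) q) :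
    Tendsto (fun n => head q n a) atTop (𝓝 a) :=
  (lp.hasSum_single hq' a).tendsto_sum_nat

lemma sum_abs_rpow_of_pairwise {ι : Type*} {r : ℝ} (hr : 0 < r) (s : Finset ι) (f : ι → ℝ)
    (h : ∀ k ∈ s, ∀ l ∈ s, k ≠ l → f k = 0 ∨ f l = 0) :
    |∑ k ∈ s, f k| ^ r = ∑ k ∈ s, |f k| ^ r := by
  by_cases hz : ∀ k ∈ s, f k = 0
  · rw [Finset.sum_eq_zero hz, Finset.sum_eq_zero (fun k hk => by
      rw [hz k hk, abs_zero, Real.zero_rpow hr.ne'])]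
    simp [Real.zero_rpow hr.ne']
  · push_neg at hz
    obtain ⟨k₀, hk₀, hfk₀⟩ := hz
    rw [Finset.sum_eq_single_of_mem k₀ hk₀ (fun l hl hne => (h l hl k₀ hk₀ hne).resolve_right hfk₀),
      Finset.sum_eq_single_of_mem k₀ hk₀ (fun l hl hne => by
        rw [(h l hl k₀ hk₀ hne).resolve_right hfk₀, abs_zero, Real.zero_rpow hr.ne'])]

lemma key_estimate {q : ℝ≥0∞} [Fact (1 ≤ q)] {pr qr : ℝ} (hc : pr.HolderConjugate qr) (hq : q.toReal = qr)
    (g : lp (fun _ : ℕ => ℝ) q →L[ℝ] ℝ) (b : ℕ → lp (fun _ : ℕ => ℝ) q)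
    (hb : ∀ k, ‖b k‖ ≤ 1)
    (hdisj : ∀ k l, k ≠ l → ∀ i, (b k : ℕ → ℝ) i = 0 ∨ (b l : ℕ → ℝ) i = 0)
    (s : Finset ℕ) :
    ∑ k ∈ s, |g (b k)| ^ pr ≤ ‖g‖ ^ pr := by
  have hpr : 0 < pr := hc.pos
  have hqr : 0 < qr := hc.symm.pos
  set a : ℕ → ℝ := fun k => g (b k) with ha
  set t := ∑ k ∈ s, |a k| ^ pr with htdef
  have ht0 : 0 ≤ t := Finset.sum_nonneg fun k _ => Real.rpow_nonneg (abs_nonneg _) _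
  rcases ht0.eq_or_lt with h0 | htpos
  · rw [← h0]
    exact Real.rpow_nonneg (norm_nonneg _) _
  set c : ℕ → ℝ := fun k => (if a k < 0 then (-1 : ℝ) else 1) * |a k| ^ (pr - 1) with hcdef
  have hca : ∀ k, c k * a k = |a k| ^ pr := by
    intro k
    by_cases h0 : a k = 0
    · simp [hcdef, h0, Real.zero_rpow hpr.ne']
    · have habs : |a k| ≠ 0 := abs_ne_zero.2 h0
      have hsplit : |a k| ^ pr = |a k| ^ (pr - 1) * |a k| := by
        rw [← Real.rpow_add_one habs (pr - 1), sub_add_cancel]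
      by_cases hneg : a k < 0
      · simp only [hcdef, if_pos hneg]
        rw [hsplit, abs_of_neg hneg]
        ring
      · simp only [hcdef, if_neg hneg]
        rw [hsplit, abs_of_nonneg (not_lt.1 hneg)]
        ring
  have habsc : ∀ k, |c k| = |a k| ^ (pr - 1) := by
    intro k
    by_cases hneg : a k < 0 <;>
      simp [hcdef, hneg, abs_of_nonneg (Real.rpow_nonneg (abs_nonneg (a k)) (pr - 1))]
  have hcq : ∀ k, |c k| ^ qr = |a k| ^ pr := by
    intro k
    rw [habsc, ← Real.rpow_mul (abs_nonneg _), hc.sub_one_mul_conj]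
  set v := ∑ k ∈ s, c k • b k with hvdef
  have hgv : g v = t := by
    rw [hvdef, map_sum]
    simp only [map_smul, smul_eq_mul]
    exact Finset.sum_congr rfl fun k _ => hca k
  have hvcoord : ∀ i, (v : ℕ → ℝ) i = ∑ k ∈ s, c k * (b k : ℕ → ℝ) i := by
    intro i
    rw [hvdef, lp.coeFn_sum, Finset.sum_apply]
    exact Finset.sum_congr rfl fun k _ => by rw [lp.coeFn_smul, Pi.smul_apply, smul_eq_mul]
  have hvnorm : ‖v‖ ≤ t ^ (1 / qr) := by
    have hq0 : 0 < q.toReal := hq ▸ hqr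
    have hrp : (t ^ (1 / qr)) ^ q.toReal = t := by
      rw [hq, ← Real.rpow_mul ht0, one_div_mul_cancel hqr.ne', Real.rpow_one]
    refine lp.norm_le_of_forall_sum_le hq0 (Real.rpow_nonneg ht0 _) fun u => ?_
    rw [hrp]
    have hcoord : ∀ i, ‖(v : ℕ → ℝ) i‖ ^ q.toReal = ∑ k ∈ s, |c k * (b k : ℕ → ℝ) i| ^ q.toReal := by
      intro i
      rw [Real.norm_eq_abs, hvcoord i]
      refine sum_abs_rpow_of_pairwise hq0 s _ fun k hk l hl hkl => ?_
      rcases hdisj k l hkl i with h | h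
      · exact Or.inl (by rw [h, mul_zero])
      · exact Or.inr (by rw [h, mul_zero])
    calc ∑ i ∈ u, ‖(v : ℕ → ℝ) i‖ ^ q.toReal
        = ∑ i ∈ u, ∑ k ∈ s, |c k * (b k : ℕ → ℝ) i| ^ q.toReal := by
          exact Finset.sum_congr rfl fun i _ => hcoord i
      _ = ∑ k ∈ s, ∑ i ∈ u, |c k * (b k : ℕ → ℝ) i| ^ q.toReal := Finset.sum_comm
      _ ≤ ∑ k ∈ s, |c k| ^ q.toReal := by
          refine Finset.sum_le_sum fun k _ => ?_
          have : ∀ i, |c k * (b k : ℕ → ℝ) i| ^ q.toReal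
              = |c k| ^ q.toReal * ‖(b k : ℕ → ℝ) i‖ ^ q.toReal := by
            intro i
            rw [abs_mul, Real.mul_rpow (abs_nonneg _) (abs_nonneg _), Real.norm_eq_abs]
          rw [Finset.sum_congr rfl fun i _ => this i, ← Finset.mul_sum]
          calc |c k| ^ q.toReal * ∑ i ∈ u, ‖(b k : ℕ → ℝ) i‖ ^ q.toReal
              ≤ |c k| ^ q.toReal * ‖b k‖ ^ q.toReal := by
                refine mul_le_mul_of_nonneg_left ?_ (Real.rpow_nonneg (abs_nonneg _) _)
                exact lp.sum_rpow_le_norm_rpow hq0 (b k) u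
            _ ≤ |c k| ^ q.toReal * 1 := by
                refine mul_le_mul_of_nonneg_left ?_ (Real.rpow_nonneg (abs_nonneg _) _)
                exact Real.rpow_le_one (lp.norm_nonneg' (b k)) (hb k) hq0.le
            _ = |c k| ^ q.toReal := mul_one _
      _ = t := by
          rw [htdef]
          refine Finset.sum_congr rfl fun k _ => ?_
          rw [hq, hcq k]
  have hmain : t ≤ ‖g‖ * t ^ (1 / qr) := by
    calc t = g v := hgv.symm
      _ ≤ |g v| := le_abs_self _
      _ ≤ ‖g‖ * ‖v‖ := g.le_opNorm v
      _ ≤ ‖g‖ * t ^ (1 / qr) := mul_le_mul_of_nonneg_left hvnorm (norm_nonneg _)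
  have hsplit : t = t ^ (1 / pr) * t ^ (1 / qr) := by
    rw [← Real.rpow_add htpos, ← Real.rpow_one t]
    rw [Real.rpow_one]
    rw [show 1 / pr + 1 / qr = 1 by
      simpa [one_div] using hc.inv_add_inv_eq_one, Real.rpow_one]
  have hfin : t ^ (1 / pr) ≤ ‖g‖ := by
    have hpos : 0 < t ^ (1 / qr) := Real.rpow_pos_of_pos htpos _
    have h2 : t ^ (1 / pr) * t ^ (1 / qr) ≤ ‖g‖ * t ^ (1 / qr) := by
      calc t ^ (1 / pr) * t ^ (1 / qr) = t := hsplit.symm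
        _ ≤ ‖g‖ * t ^ (1 / qr) := hmain
    exact le_of_mul_le_mul_right h2 hpos
  calc t = (t ^ (1 / pr)) ^ pr := by
        rw [← Real.rpow_mul ht0, one_div_mul_cancel hpr.ne', Real.rpow_one]
    _ ≤ ‖g‖ ^ pr := Real.rpow_le_rpow (Real.rpow_nonneg ht0 _) hfin hpr.le

lemma forward {X Y : Type*} [NormedAddCommGroup X] [NormedSpace ℝ X] [CompleteSpace X]
    [NormedAddCommGroup Y] [NormedSpace ℝ Y] [CompleteSpace Y]
    {p q : ℝ≥0∞} [Fact (1 ≤ q)] (hqt : q ≠ ⊤)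
    (hc : p.toReal.HolderConjugate q.toReal)
    (T : X →L[ℝ] Y) (hT : PConvergent p T)
    (S : lp (fun _ : ℕ => ℝ) q →L[ℝ] X) : IsCompactOperator (T.comp S) := by
  have hqr : 0 < q.toReal := hc.symm.pos
  have hq0 : q ≠ 0 := fun h => by simp [h] at hqr
  -- Key claim
  have KC : ∀ ε > (0:ℝ), ∃ n : ℕ, ∀ a : lp (fun _ : ℕ => ℝ) q, ‖a‖ ≤ 1 →
      ‖T (S (a - head q n a))‖ ≤ ε := by
    by_contra hKC
    push_neg at hKC
    obtain ⟨ε, hε, hbad⟩ := hKC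
    have CH : ∀ n : ℕ, ∃ M : ℕ, n < M ∧ ∃ b : lp (fun _ : ℕ => ℝ) q, ‖b‖ ≤ 1 ∧
        (∀ i, i < n → (b : ℕ → ℝ) i = 0) ∧ (∀ i, M ≤ i → (b : ℕ → ℝ) i = 0) ∧
        ε < ‖T (S b)‖ := by
      intro n
      obtain ⟨a, ha1, ha2⟩ := hbad n
      set w := a - head q n a with hw
      have hw1 : ‖w‖ ≤ 1 := le_trans (norm_sub_head_le hqr n a) ha1
      have hw0 : ∀ i, i < n → (w : ℕ → ℝ) i = 0 := by
        intro i hi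
        rw [hw, lp.coeFn_sub, Pi.sub_apply, head_apply, if_pos hi, sub_self]
      have htend : Tendsto (fun M => ‖T (S (head q M w))‖) atTop (𝓝 ‖T (S w)‖) :=
        (((T.comp S).continuous.tendsto w).comp (tendsto_head hqt w)).norm
      have hev : ∀ᶠ M in atTop, ε < ‖T (S (head q M w))‖ :=
        htend.eventually (eventually_gt_nhds ha2)
      obtain ⟨M₀, hM₀⟩ := eventually_atTop.1 hev
      refine ⟨max M₀ (n + 1), lt_of_lt_of_le (Nat.lt_succ_self n) (le_max_right _ _),
        head q (max M₀ (n + 1)) w, le_trans (norm_head_le hqr _ w) hw1, ?_, ?_,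
        hM₀ _ (le_max_left _ _)⟩
      · intro i hi
        rw [head_apply]
        split_ifs
        · exact hw0 i hi
        · rfl
      · intro i hi
        rw [head_apply, if_neg (not_lt.2 hi)]
    choose F hF b hb1 hb2 hb3 hb4 using CH
    set m : ℕ → ℕ := fun k => F^[k] 0 with hm
    have hmsucc : ∀ k, m (k + 1) = F (m k) := fun k => Function.iterate_succ_apply' F k 0
    have hmono : StrictMono m :=
      strictMono_nat_of_lt_succ fun k => by rw [hmsucc]; exact hF (m k)
    set B : ℕ → lp (fun _ : ℕ => ℝ) q := fun k => b (m k) with hB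
    have hdisj : ∀ k l, k ≠ l → ∀ i, (B k : ℕ → ℝ) i = 0 ∨ (B l : ℕ → ℝ) i = 0 := by
      have key : ∀ k l, k < l → ∀ i, (B k : ℕ → ℝ) i = 0 ∨ (B l : ℕ → ℝ) i = 0 := by
        intro k l hkl i
        by_cases hi : i < F (m k)
        · refine Or.inr (hb2 (m l) i ?_)
          calc i < F (m k) := hi
            _ = m (k + 1) := (hmsucc k).symm
            _ ≤ m l := hmono.monotone hkl
        · exact Or.inl (hb3 (m k) i (not_lt.1 hi))
      intro k l hkl i
      rcases hkl.lt_or_gt with h | h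
      · exact key k l h i
      · exact (key l k h i).symm
    have hwps : WeaklyPSummable p fun k => S (B k) := by
      intro f
      refine memℓp_gen' (C := ‖f.comp S‖ ^ p.toReal) fun s => ?_
      have := key_estimate hc rfl (f.comp S) B (fun k => hb1 (m k)) hdisj s
      simpa using this
    have hnull := hT _ hwps
    have hev2 : ∀ᶠ k in atTop, ‖T (S (B k))‖ < ε := hnull.eventually (eventually_lt_nhds hε)
    obtain ⟨k, hk⟩ := hev2.exists
    exact absurd (hb4 (m k)) (not_lt.2 hk.le)
  -- totally bounded
  have htb : TotallyBounded (⇑(T.comp S) '' closedBall 0 1) := by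
    rw [Metric.totallyBounded_iff]
    intro ε hε
    obtain ⟨n, hn⟩ := KC (ε / 3) (by positivity)
    set h : (Fin n → ℝ) → Y := fun w => ∑ i : Fin n, w i • T (S (lp.single q (i : ℕ) 1)) with hh
    have hcont : Continuous h := by
      refine continuous_finset_sum _ fun i _ => ((continuous_apply (i : Fin n)).smul
        continuous_const)
    have hK₀ : IsCompact (h '' closedBall 0 1) :=
      (isCompact_closedBall (0 : Fin n → ℝ) 1).image hcont
    obtain ⟨t, htf, htsub⟩ := Metric.totallyBounded_iff.1 hK₀.totallyBounded (ε / 3)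
      (by positivity)
    refine ⟨t, htf, ?_⟩
    rintro y ⟨a, haball, rfl⟩
    have ha1 : ‖a‖ ≤ 1 := mem_closedBall_zero_iff.1 haball
    have hhead : h (fun i : Fin n => (a : ℕ → ℝ) i) = T (S (head q n a)) := by
      rw [hh, head, map_sum, map_sum, ← Fin.sum_univ_eq_sum_range
        (fun i => T (S (lp.single q i ((a : ℕ → ℝ) i))))]
      refine Finset.sum_congr rfl fun i _ => ?_
      have h1 : lp.single (E := fun _ : ℕ => ℝ) q (i : ℕ) ((a : ℕ → ℝ) i)
          = ((a : ℕ → ℝ) i) • lp.single (E := fun _ : ℕ => ℝ) q (i : ℕ) (1 : ℝ) := by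
        rw [← lp.single_smul (E := fun _ : ℕ => ℝ) q (i : ℕ) ((a : ℕ → ℝ) i) (1 : ℝ), smul_eq_mul, mul_one]
      rw [h1, map_smul, map_smul]
    have hwball : (fun i : Fin n => (a : ℕ → ℝ) i) ∈ closedBall (0 : Fin n → ℝ) 1 := by
      rw [mem_closedBall_zero_iff]
      refine pi_norm_le_iff_of_nonneg zero_le_one |>.2 fun i => ?_
      exact le_trans (lp.norm_apply_le_norm hq0 a (i : ℕ)) ha1
    have hmem : h (fun i : Fin n => (a : ℕ → ℝ) i) ∈ h '' closedBall 0 1 :=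
      Set.mem_image_of_mem h hwball
    obtain ⟨z, hzt, hz⟩ := Set.mem_iUnion₂.1 (htsub hmem)
    refine Set.mem_iUnion₂.2 ⟨z, hzt, ?_⟩
    rw [mem_ball]
    have hd1 : dist ((T.comp S) a) (h (fun i : Fin n => (a : ℕ → ℝ) i)) ≤ ε / 3 := by
      rw [hhead, dist_eq_norm]
      have : (T.comp S) a - T (S (head q n a)) = T (S (a - head q n a)) := by
        simp [map_sub]
      rw [this]
      exact hn a ha1
    calc dist ((T.comp S) a) z
        ≤ dist ((T.comp S) a) (h (fun i : Fin n => (a : ℕ → ℝ) i)) +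
          dist (h (fun i : Fin n => (a : ℕ → ℝ) i)) z := dist_triangle _ _ _
      _ < ε / 3 + ε / 3 := by
          have := mem_ball.1 hz
          linarith
      _ < ε := by linarith
  have h2 : IsCompactOperator ((T.comp S) : lp (fun _ : ℕ => ℝ) q →ₗ[ℝ] Y) := by
    rw [isCompactOperator_iff_isCompact_closure_image_closedBall _ zero_lt_one]
    exact htb.closure.isCompact_of_isClosed isClosed_closure
  exact h2


lemma conj_real {p q : ℝ≥0∞} (hp : 1 < p) (hp' : p ≠ ⊤) (hq : 1 ≤ q)
    (hpq : p⁻¹ + q⁻¹ = 1) : p.toReal.HolderConjugate q.toReal := by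
  have hq0 : q ≠ 0 := fun h => by simp [h] at hq
  have hqt : q ≠ ⊤ := by
    intro h
    rw [h] at hpq
    simp only [ENNReal.inv_top, add_zero, ENNReal.inv_eq_one] at hpq
    exact hp.ne' hpq
  have hp0 : p ≠ 0 := fun h => by simp [h] at hp
  refine Real.holderConjugate_iff.mpr ⟨?_, ?_⟩
  · rw [show (1:ℝ) = (1:ℝ≥0∞).toReal by simp]
    exact (ENNReal.toReal_lt_toReal (by simp) hp').2 hp
  · have h1 : (p⁻¹ + q⁻¹).toReal = 1 := by rw [hpq]; simp
    rw [ENNReal.toReal_add (by simp [hp0]) (by simp [hq0]), ENNReal.toReal_inv,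
      ENNReal.toReal_inv] at h1
    simpa [one_div] using h1




/-- From a weakly `p`-summable sequence, build the bounded operator
`Dual X → ℓ_p`, `f ↦ (f (y n))ₙ`, using the closed graph theorem. -/
lemma exists_dual_bound {X : Type*} [NormedAddCommGroup X] [NormedSpace ℝ X] [CompleteSpace X]
    {p : ℝ≥0∞} [Fact (1 ≤ p)] (hpr : 0 < p.toReal) (y : ℕ → X)
    (hy : WeaklyPSummable p y) :
    ∃ C : ℝ, 0 ≤ C ∧ ∀ f : StrongDual ℝ X,
      ‖(⟨fun n => f (y n), hy f⟩ : lp (fun _ : ℕ => ℝ) p)‖ ≤ C * ‖f‖ := by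
  have hp0 : p ≠ 0 := fun h => by simp [h] at hpr
  set Alin : StrongDual ℝ X →ₗ[ℝ] lp (fun _ : ℕ => ℝ) p :=
    { toFun := fun f => ⟨fun n => f (y n), hy f⟩
      map_add' := fun f g => by
        apply Subtype.ext
        rw [lp.coeFn_add]
        exact funext fun n => by simp
      map_smul' := fun c f => by
        apply Subtype.ext
        rw [lp.coeFn_smul]
        exact funext fun n => by simp } with hAlin
  have hcont : Continuous Alin := by
    apply Alin.continuous_of_seq_closed_graph
    intro u f z hu hz
    apply Subtype.ext
    refine funext fun n => ?_
    have h1 : Tendsto (fun j => (u j) (y n)) atTop (𝓝 (f (y n))) := by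
      have : ∀ j, ‖(u j) (y n) - f (y n)‖ ≤ ‖u j - f‖ * ‖y n‖ := fun j => by
        calc ‖(u j) (y n) - f (y n)‖ = ‖(u j - f) (y n)‖ := by simp
          _ ≤ ‖u j - f‖ * ‖y n‖ := (u j - f).le_opNorm (y n)
      rw [tendsto_iff_norm_sub_tendsto_zero]
      refine squeeze_zero (fun j => norm_nonneg _) this ?_
      have : Tendsto (fun j => ‖u j - f‖) atTop (𝓝 0) :=
        tendsto_iff_norm_sub_tendsto_zero.1 hu
      simpa using this.mul_const ‖y n‖
    have h2 : Tendsto (fun j => (u j) (y n)) atTop (𝓝 ((z : ℕ → ℝ) n)) := by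
      have hb : ∀ j, ‖(Alin (u j) : ℕ → ℝ) n - (z : ℕ → ℝ) n‖ ≤ ‖Alin (u j) - z‖ := fun j => by
        have := lp.norm_apply_le_norm hp0 (Alin (u j) - z) n
        rwa [lp.coeFn_sub, Pi.sub_apply] at this
      have hz' : Tendsto (fun j => ‖Alin (u j) - z‖) atTop (𝓝 0) :=
        tendsto_iff_norm_sub_tendsto_zero.1 hz
      have h3 : Tendsto (fun j => (Alin (u j) : ℕ → ℝ) n - (z : ℕ → ℝ) n) atTop (𝓝 0) :=
        squeeze_zero_norm hb hz'
      have := h3.add_const ((z : ℕ → ℝ) n)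
      simp only [sub_add_cancel, zero_add] at this; exact this
    exact tendsto_nhds_unique h2 h1
  set A : StrongDual ℝ X →L[ℝ] lp (fun _ : ℕ => ℝ) p := ⟨Alin, hcont⟩ with hA
  exact ⟨‖A‖, norm_nonneg A, fun f => A.le_opNorm f⟩


lemma backward {X Y : Type*} [NormedAddCommGroup X] [NormedSpace ℝ X] [CompleteSpace X]
    [NormedAddCommGroup Y] [NormedSpace ℝ Y] [CompleteSpace Y]
    {p q : ℝ≥0∞} [Fact (1 ≤ p)] [Fact (1 ≤ q)]
    (hc : p.toReal.HolderConjugate q.toReal) (T : X →L[ℝ] Y)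
    (hS : ∀ S : lp (fun _ : ℕ => ℝ) q →L[ℝ] X, IsCompactOperator (T.comp S)) :
    PConvergent p T := by
  have hpr : 0 < p.toReal := hc.pos
  have hqr : 0 < q.toReal := hc.symm.pos
  have hq0 : q ≠ 0 := fun h => by simp [h] at hqr
  intro x hx
  by_contra hnot
  -- extract a subsequence bounded away from zero
  have hfreq : ∃ ε > (0:ℝ), ∃ᶠ n in atTop, ε ≤ ‖T (x n)‖ := by
    by_contra hno
    push_neg at hno
    apply hnot
    show Tendsto (fun n => ‖T (x n)‖) atTop (𝓝 0)
    rw [Metric.tendsto_atTop]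
    intro ε hε
    have := hno ε hε
    simp only [← not_le] at this
    obtain ⟨N, hN⟩ := eventually_atTop.1 this
    refine ⟨N, fun n hn => ?_⟩
    rw [Real.dist_eq, sub_zero, abs_of_nonneg (norm_nonneg _)]
    exact lt_of_not_ge (hN n hn)
  obtain ⟨ε, hε, hfr⟩ := hfreq
  obtain ⟨φ, hφ, hφε⟩ := Filter.extraction_of_frequently_atTop hfr
  set y : ℕ → X := fun k => x (φ k) with hy'
  have hy : WeaklyPSummable p y := by
    intro f
    exact memℓp_gen (((hx f).summable hpr).comp_injective hφ.injective)
  obtain ⟨C, hC0, hCb⟩ := exists_dual_bound hpr y hy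
  -- Hölder bound for finite sums
  have hbound : ∀ (c : ℕ → ℝ) (s : Finset ℕ),
      ‖∑ k ∈ s, c k • y k‖ ≤ C * (∑ k ∈ s, |c k| ^ q.toReal) ^ (1 / q.toReal) * 1 := by
    intro c s
    have hRnn : (0:ℝ) ≤ (∑ k ∈ s, |c k| ^ q.toReal) ^ (1 / q.toReal) :=
      Real.rpow_nonneg (Finset.sum_nonneg fun k _ => Real.rpow_nonneg (abs_nonneg _) _) _
    rw [mul_one]
    refine NormedSpace.norm_le_dual_bound ℝ _ (mul_nonneg hC0 hRnn) fun f => ?_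
    have hfA : (∑ k ∈ s, |f (y k)| ^ p.toReal) ^ (1 / p.toReal) ≤ C * ‖f‖ := by
      have h1 : ∑ k ∈ s, |f (y k)| ^ p.toReal
          ≤ ‖(⟨fun n => f (y n), hy f⟩ : lp (fun _ : ℕ => ℝ) p)‖ ^ p.toReal := by
        have := lp.sum_rpow_le_norm_rpow hpr (⟨fun n => f (y n), hy f⟩ :
          lp (fun _ : ℕ => ℝ) p) s
        simpa using this
      calc (∑ k ∈ s, |f (y k)| ^ p.toReal) ^ (1 / p.toReal)
          ≤ (‖(⟨fun n => f (y n), hy f⟩ : lp (fun _ : ℕ => ℝ) p)‖ ^ p.toReal) ^ (1 / p.toReal) :=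
            Real.rpow_le_rpow (Finset.sum_nonneg fun k _ =>
              Real.rpow_nonneg (abs_nonneg _) _) h1 (by positivity)
        _ = ‖(⟨fun n => f (y n), hy f⟩ : lp (fun _ : ℕ => ℝ) p)‖ := by
            rw [← Real.rpow_mul (norm_nonneg _), mul_one_div_cancel hpr.ne', Real.rpow_one]
        _ ≤ C * ‖f‖ := hCb f
    calc ‖f (∑ k ∈ s, c k • y k)‖ = |∑ k ∈ s, c k * f (y k)| := by
          rw [map_sum]
          simp [Real.norm_eq_abs]
      _ ≤ ∑ k ∈ s, |c k * f (y k)| := Finset.abs_sum_le_sum_abs _ _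
      _ = ∑ k ∈ s, |c k| * |f (y k)| := by
          exact Finset.sum_congr rfl fun k _ => abs_mul _ _
      _ ≤ (∑ k ∈ s, |(|c k|)| ^ q.toReal) ^ (1 / q.toReal) *
            (∑ k ∈ s, |(|f (y k)|)| ^ p.toReal) ^ (1 / p.toReal) :=
          Real.inner_le_Lp_mul_Lq s _ _ hc.symm
      _ = (∑ k ∈ s, |c k| ^ q.toReal) ^ (1 / q.toReal) *
            (∑ k ∈ s, |f (y k)| ^ p.toReal) ^ (1 / p.toReal) := by
          simp [abs_abs]
      _ ≤ (∑ k ∈ s, |c k| ^ q.toReal) ^ (1 / q.toReal) * (C * ‖f‖) := by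
          refine mul_le_mul_of_nonneg_left hfA hRnn
      _ = C * (∑ k ∈ s, |c k| ^ q.toReal) ^ (1 / q.toReal) * ‖f‖ := by ring
  -- summability
  have hsummand : ∀ a : lp (fun _ : ℕ => ℝ) q, Summable fun k => (a : ℕ → ℝ) k • y k := by
    intro a
    rw [summable_iff_vanishing_norm]
    intro δ hδ
    have hsq : Summable fun k => ‖(a : ℕ → ℝ) k‖ ^ q.toReal := (lp.memℓp a).summable hqr
    have hδ' : (0:ℝ) < (δ / (C + 1)) ^ q.toReal := by positivity
    obtain ⟨s, hs⟩ := summable_iff_vanishing_norm.1 hsq _ hδ'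
    refine ⟨s, fun t ht => ?_⟩
    have h1 : ∑ k ∈ t, |(a : ℕ → ℝ) k| ^ q.toReal ≤ (δ / (C + 1)) ^ q.toReal := by
      have := hs t ht
      rw [Real.norm_eq_abs, abs_of_nonneg (Finset.sum_nonneg fun k _ =>
        Real.rpow_nonneg (norm_nonneg _) _)] at this
      refine le_of_lt (lt_of_le_of_lt (le_of_eq ?_) this)
      exact Finset.sum_congr rfl fun k _ => by rw [Real.norm_eq_abs]
    have h2 : (∑ k ∈ t, |(a : ℕ → ℝ) k| ^ q.toReal) ^ (1 / q.toReal) ≤ δ / (C + 1) := by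
      calc (∑ k ∈ t, |(a : ℕ → ℝ) k| ^ q.toReal) ^ (1 / q.toReal)
          ≤ ((δ / (C + 1)) ^ q.toReal) ^ (1 / q.toReal) :=
            Real.rpow_le_rpow (Finset.sum_nonneg fun k _ =>
              Real.rpow_nonneg (abs_nonneg _) _) h1 (by positivity)
        _ = δ / (C + 1) := by
            rw [← Real.rpow_mul (by positivity), mul_one_div_cancel hqr.ne', Real.rpow_one]
    calc ‖∑ k ∈ t, (a : ℕ → ℝ) k • y k‖
        ≤ C * (∑ k ∈ t, |(a : ℕ → ℝ) k| ^ q.toReal) ^ (1 / q.toReal) * 1 := hbound _ t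
      _ ≤ C * (δ / (C + 1)) * 1 := by
          rw [mul_one, mul_one]
          exact mul_le_mul_of_nonneg_left h2 hC0
      _ < δ := by
          rw [mul_one, mul_div_assoc']
          rw [div_lt_iff₀ (by positivity)]
          nlinarith
  -- the operator S
  set Slin : lp (fun _ : ℕ => ℝ) q →ₗ[ℝ] X :=
    { toFun := fun a => ∑' k, (a : ℕ → ℝ) k • y k
      map_add' := fun a b => by
        dsimp only
        have h1 : ∀ k, ((a + b : lp (fun _ : ℕ => ℝ) q) : ℕ → ℝ) k • y k
            = (a : ℕ → ℝ) k • y k + (b : ℕ → ℝ) k • y k := fun k => by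
          rw [lp.coeFn_add, Pi.add_apply, add_smul]
        rw [tsum_congr h1, Summable.tsum_add (hsummand a) (hsummand b)]
      map_smul' := fun c a => by
        dsimp only
        have h1 : ∀ k, ((c • a : lp (fun _ : ℕ => ℝ) q) : ℕ → ℝ) k • y k
            = c • ((a : ℕ → ℝ) k • y k) := fun k => by
          rw [lp.coeFn_smul, Pi.smul_apply, smul_smul, smul_eq_mul]
        rw [tsum_congr h1, Summable.tsum_const_smul c (hsummand a)]
        rfl } with hSlin
  have hSbound : ∀ a : lp (fun _ : ℕ => ℝ) q, ‖Slin a‖ ≤ C * ‖a‖ := by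
    intro a
    have hha : HasSum (fun k => (a : ℕ → ℝ) k • y k) (Slin a) := (hsummand a).hasSum
    have h1 : Tendsto (fun s : Finset ℕ => ‖∑ k ∈ s, (a : ℕ → ℝ) k • y k‖) atTop
        (𝓝 ‖Slin a‖) := (Filter.Tendsto.norm hha)
    refine le_of_tendsto h1 (Filter.Eventually.of_forall fun s => ?_)
    have h2 : (∑ k ∈ s, |(a : ℕ → ℝ) k| ^ q.toReal) ^ (1 / q.toReal) ≤ ‖a‖ := by
      have h3 : ∑ k ∈ s, |(a : ℕ → ℝ) k| ^ q.toReal ≤ ‖a‖ ^ q.toReal := by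
        have := lp.sum_rpow_le_norm_rpow hqr a s
        simpa using this
      calc (∑ k ∈ s, |(a : ℕ → ℝ) k| ^ q.toReal) ^ (1 / q.toReal)
          ≤ (‖a‖ ^ q.toReal) ^ (1 / q.toReal) :=
            Real.rpow_le_rpow (Finset.sum_nonneg fun k _ =>
              Real.rpow_nonneg (abs_nonneg _) _) h3 (by positivity)
        _ = ‖a‖ := by
            rw [← Real.rpow_mul (lp.norm_nonneg' _), mul_one_div_cancel hqr.ne', Real.rpow_one]
    calc ‖∑ k ∈ s, (a : ℕ → ℝ) k • y k‖
        ≤ C * (∑ k ∈ s, |(a : ℕ → ℝ) k| ^ q.toReal) ^ (1 / q.toReal) * 1 := hbound _ s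
      _ ≤ C * ‖a‖ := by
          rw [mul_one]
          exact mul_le_mul_of_nonneg_left h2 hC0
  set S : lp (fun _ : ℕ => ℝ) q →L[ℝ] X := Slin.mkContinuous C hSbound with hS'
  have hSe : ∀ k : ℕ, S (lp.single q k 1) = y k := by
    intro k
    show ∑' n, ((lp.single q k (1:ℝ) : lp (fun _ : ℕ => ℝ) q) : ℕ → ℝ) n • y n = y k
    have ht := tsum_eq_single (L := SummationFilter.unconditional ℕ) (f := fun n => ((lp.single q k (1:ℝ) :
      lp (fun _ : ℕ => ℝ) q) : ℕ → ℝ) n • y n) k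
      (fun n hn => by
        have h0 : ((lp.single q k (1:ℝ) : lp (fun _ : ℕ => ℝ) q) : ℕ → ℝ) n = 0 :=
          lp.single_apply_ne q k _ hn
        dsimp only
        rw [h0, zero_smul])
    rw [ht]
    dsimp only
    rw [lp.single_apply_self, one_smul]
  -- compactness of T ∘ S gives a convergent subsequence of T (y k)
  have hcS' : IsCompactOperator ((T.comp S : lp (fun _ : ℕ => ℝ) q →L[ℝ] Y) :
      lp (fun _ : ℕ => ℝ) q →ₗ[ℝ] Y) := hS S
  obtain ⟨K, hK, hKsub⟩ := hcS'.image_closedBall_subset_compact 1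
  have hinK : ∀ k : ℕ, T (y k) ∈ K := by
    intro k
    have hns : ‖(lp.single q k 1 : lp (fun _ : ℕ => ℝ) q)‖ ≤ 1 := by
      have := lp.norm_single (E := fun _ : ℕ => ℝ) (pos_iff_ne_zero.2 hq0) k (1:ℝ)
      rw [this]
      simp
    have heq : (((T.comp S) : lp (fun _ : ℕ => ℝ) q →ₗ[ℝ] Y)) (lp.single q k 1) = T (y k) := by
      show (T.comp S) (lp.single q k 1) = T (y k)
      rw [ContinuousLinearMap.comp_apply, hSe k]
    exact hKsub ⟨lp.single q k 1, mem_closedBall_zero_iff.2 hns, heq⟩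
  obtain ⟨z, hzK, ψ, hψ, hconv⟩ := hK.tendsto_subseq hinK
  have hz0 : z = 0 := by
    refine NormedSpace.eq_zero_of_forall_dual_eq_zero ℝ fun g => ?_
    have h1 : Tendsto (fun j => g (T (y (ψ j)))) atTop (𝓝 (g z)) :=
      (g.continuous.tendsto z).comp hconv
    have h2 : Tendsto (fun k => g (T (y k))) atTop (𝓝 0) := by
      have hm : Summable fun k => ‖(g.comp T) (y k)‖ ^ p.toReal :=
        (hy (g.comp T)).summable hpr
      have h3 := hm.tendsto_atTop_zero
      rw [tendsto_zero_iff_norm_tendsto_zero]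
      have h4 : ∀ k, ‖g (T (y k))‖ = (‖(g.comp T) (y k)‖ ^ p.toReal) ^ (1 / p.toReal) := by
        intro k
        rw [← Real.rpow_mul (norm_nonneg _), mul_one_div_cancel hpr.ne', Real.rpow_one]
        rfl
      have h5 : Tendsto (fun k => (‖(g.comp T) (y k)‖ ^ p.toReal) ^ (1 / p.toReal)) atTop
          (𝓝 ((0:ℝ) ^ (1 / p.toReal))) :=
        ((Real.continuousAt_rpow_const 0 (1 / p.toReal) (Or.inr (by positivity))).tendsto).comp h3
      rw [Real.zero_rpow (by positivity : (1:ℝ) / p.toReal ≠ 0)] at h5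
      exact Tendsto.congr (fun k => (h4 k).symm) h5
    have h2' : Tendsto (fun j => g (T (y (ψ j)))) atTop (𝓝 0) := h2.comp hψ.tendsto_atTop
    exact tendsto_nhds_unique h1 h2'
  rw [hz0] at hconv
  have hnorm := hconv.norm
  rw [norm_zero] at hnorm
  have hev : ∀ᶠ j in atTop, ‖T (y (ψ j))‖ < ε := hnorm.eventually (eventually_lt_nhds hε)
  obtain ⟨j, hj⟩ := hev.exists
  exact absurd (hφε (ψ j)) (not_le.2 hj)


end Stmt0Aux

/-- For `1 < p < ∞` with conjugate exponent `q`, an operator `T : X → Y`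
between Banach spaces is `p`-convergent iff `T ∘ S` is compact for every operator
`S : ℓ_q → X`. -/
theorem stmt_0 {X Y : Type*} [NormedAddCommGroup X] [NormedSpace ℝ X] [CompleteSpace X]
    [NormedAddCommGroup Y] [NormedSpace ℝ Y] [CompleteSpace Y]
    (p q : ℝ≥0∞) (hp : 1 < p) (hp' : p ≠ ⊤) [Fact (1 ≤ q)] (hpq : p⁻¹ + q⁻¹ = 1)
    (T : X →L[ℝ] Y) :
    PConvergent p T ↔
      ∀ S : lp (fun _ : ℕ => ℝ) q →L[ℝ] X, IsCompactOperator (T.comp S) := by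
  haveI : Fact (1 ≤ p) := ⟨hp.le⟩
  have hq1 : (1 : ℝ≥0∞) ≤ q := Fact.out
  have hqt : q ≠ ⊤ := by
    intro h
    rw [h] at hpq
    simp only [ENNReal.inv_top, add_zero, ENNReal.inv_eq_one] at hpq
    exact hp.ne' hpq
  have hc : p.toReal.HolderConjugate q.toReal := Stmt0Aux.conj_real hp hp' hq1 hpq
  constructor
  · intro hT S
    exact Stmt0Aux.forward hqt hc T hT S
  · intro hS
    exact Stmt0Aux.backward hc T hS
end
end

section
/- Let 1 ≤ p < ∞ and let T: Y → X be an operator between Banach spaces. Then T(B_Y) is a weakly-p-Dunford-Pettis subset of X if and only if the adjoint T*: X* → Y* is p-convergent. -/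
open Filter Topology Metric NormedSpace Bornology ENNReal

noncomputable section

/-- For `1 ≤ p < ∞` and an operator `T : Y → X` between Banach spaces,
`T(B_Y)` is a weakly-`p`-Dunford-Pettis subset of `X` iff `T* : X* → Y*` is
`p`-convergent. -/
theorem stmt_2 {X Y : Type*} [NormedAddCommGroup X] [NormedSpace ℝ X] [CompleteSpace X]
    [NormedAddCommGroup Y] [NormedSpace ℝ Y] [CompleteSpace Y]
    (p : ℝ≥0∞) (hp : 1 ≤ p) (hp' : p ≠ ⊤) (T : Y →L[ℝ] X) :
    WeaklyPDP p (⇑T '' closedBall 0 1) ↔ PConvergent p (adjOp T) := by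
  have hadj : ∀ (f : StrongDual ℝ X) (y : Y), adjOp T f y = f (T y) := by
    intro f y; rfl
  constructor
  · rintro ⟨-, hU⟩ f hf
    rw [NormNull, NormedAddCommGroup.tendsto_atTop]
    intro ε hε
    obtain ⟨N, hN⟩ := hU f hf (ε / 2) (by positivity)
    refine ⟨N, fun n hn => ?_⟩
    rw [Real.norm_eq_abs, sub_zero, abs_of_nonneg (norm_nonneg _)]
    have h2 : ‖adjOp T (f n)‖ ≤ ε / 2 := by
      refine ContinuousLinearMap.opNorm_le_bound _ (by positivity) fun y => ?_
      rcases eq_or_ne y 0 with rfl | hy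
      · simp
      · have hy1 : (‖y‖⁻¹ • y) ∈ closedBall (0 : Y) 1 := by
          simp [mem_closedBall_zero_iff, norm_smul, abs_of_nonneg,
            inv_mul_cancel₀ (norm_ne_zero_iff.2 hy)]
        have := hN n hn (T (‖y‖⁻¹ • y)) ⟨_, hy1, rfl⟩
        simp only [map_smul, smul_eq_mul] at this
        rw [hadj, Real.norm_eq_abs]
        have hny : (0 : ℝ) < ‖y‖ := norm_pos_iff.2 hy
        calc |f n (T y)| = ‖y‖ * |‖y‖⁻¹ * f n (T y)| := by
              rw [abs_mul, abs_inv, abs_of_nonneg (norm_nonneg y)]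
              field_simp
          _ ≤ ‖y‖ * (ε / 2) := by
              refine mul_le_mul_of_nonneg_left ?_ (norm_nonneg y)
              simpa [smul_eq_mul] using this
          _ = ε / 2 * ‖y‖ := by ring
    linarith
  · intro hPC
    constructor
    · rw [isBounded_iff_forall_norm_le]
      refine ⟨‖T‖, ?_⟩
      rintro a ⟨y, hy, rfl⟩
      calc ‖T y‖ ≤ ‖T‖ * ‖y‖ := T.le_opNorm y
        _ ≤ ‖T‖ * 1 := by
            exact mul_le_mul_of_nonneg_left (by simpa using mem_closedBall_zero_iff.1 hy)
              (norm_nonneg T)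
        _ = ‖T‖ := mul_one _
    · intro f hf ε hε
      have h := hPC f hf
      rw [NormNull, NormedAddCommGroup.tendsto_atTop] at h
      obtain ⟨N, hN⟩ := h ε hε
      refine ⟨N, fun n hn a ha => ?_⟩
      rcases ha with ⟨y, hy, rfl⟩
      have h1 : |adjOp T (f n) y| ≤ ‖adjOp T (f n)‖ * ‖y‖ :=
        (adjOp T (f n)).le_opNorm y
      have h2 : ‖adjOp T (f n)‖ ≤ ε := by
        have := hN n hn
        rw [Real.norm_eq_abs, sub_zero, abs_of_nonneg (norm_nonneg _)] at this
        exact this.le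
      calc |f n (T y)| = |adjOp T (f n) y| := by rw [hadj]
        _ ≤ ‖adjOp T (f n)‖ * ‖y‖ := h1
        _ ≤ ε * 1 := by
            exact mul_le_mul h2 (by simpa using mem_closedBall_zero_iff.1 hy)
              (norm_nonneg y) (le_of_lt hε)
        _ = ε := mul_one _
end
end

section
/- Let 1 ≤ p < ∞. A Banach space X has the property that every weakly-p-Dunford-Pettis subset of X is relatively weakly compact if and only if for every Banach space Y, every operator T: Y → X whose adjoint T*: X* → Y* is p-convergent is weakly compact. Moreover it suffices to test with Y = ℓ₁. -/
open Filter Topology Metric NormedSpace Bornology ENNReal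

noncomputable section

set_option linter.unusedSectionVars false
section AuxSec
variable {X : Type} [NormedAddCommGroup X] [NormedSpace ℝ X] [CompleteSpace X]

lemma ellone_norm_sum (y : lp (fun _ : ℕ => ℝ) 1) : (∑' n, ‖y n‖) = ‖y‖ := by
  have := lp.norm_rpow_eq_tsum (p := 1) (by simp) y
  simpa using this.symm

lemma ellone_summable_norm (y : lp (fun _ : ℕ => ℝ) 1) : Summable fun n => ‖y n‖ := by
  have := (lp.memℓp y).summable (p := 1) (by simp)
  simpa using this

lemma ellone_summable_n (y : lp (fun _ : ℕ => ℝ) 1) (x : ℕ → X) {M : ℝ}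
    (hM : ∀ n, ‖x n‖ ≤ M) : Summable fun n => ‖y n • x n‖ := by
  refine ((ellone_summable_norm y).mul_right M).of_nonneg_of_le
    (fun n => norm_nonneg _) fun n => ?_
  rw [norm_smul]
  exact mul_le_mul_of_nonneg_left (hM n) (norm_nonneg _)

lemma ellone_summable (y : lp (fun _ : ℕ => ℝ) 1) (x : ℕ → X) {M : ℝ}
    (hM : ∀ n, ‖x n‖ ≤ M) : Summable fun n => y n • x n :=
  (ellone_summable_n y x hM).of_norm

def seqOp (x : ℕ → X) (M : ℝ) (hM : ∀ n, ‖x n‖ ≤ M) :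
    lp (fun _ : ℕ => ℝ) 1 →L[ℝ] X :=
  LinearMap.mkContinuous
    { toFun := fun y => ∑' n, y n • x n
      map_add' := fun y z => by
        simp only [lp.coeFn_add, Pi.add_apply, add_smul]
        exact Summable.tsum_add (ellone_summable y x hM) (ellone_summable z x hM)
      map_smul' := fun c y => by
        simp only [lp.coeFn_smul, Pi.smul_apply, smul_eq_mul, RingHom.id_apply, mul_smul]
        exact Summable.tsum_const_smul c (ellone_summable y x hM) }
    M (fun y => by
      simp only [LinearMap.coe_mk, AddHom.coe_mk]
      calc ‖∑' n, y n • x n‖ ≤ ∑' n, ‖y n • x n‖ :=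
            norm_tsum_le_tsum_norm (ellone_summable_n y x hM)
        _ ≤ ∑' n, M * ‖y n‖ := by
            refine Summable.tsum_le_tsum (fun n => ?_) (ellone_summable_n y x hM) ((ellone_summable_norm y).mul_left M)
            rw [norm_smul, mul_comm]
            exact mul_le_mul_of_nonneg_right (hM n) (norm_nonneg _)
        _ = M * ∑' n, ‖y n‖ := tsum_mul_left
        _ = M * ‖y‖ := by rw [ellone_norm_sum])

lemma seqOp_single (x : ℕ → X) (M : ℝ) (hM : ∀ n, ‖x n‖ ≤ M) (n : ℕ) :
    seqOp x M hM (lp.single 1 n (1:ℝ)) = x n := by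
  show (∑' m, (lp.single 1 n (1:ℝ) : lp (fun _ : ℕ => ℝ) 1) m • x m) = x n
  rw [tsum_eq_single n]
  · rw [lp.single_apply_self, one_smul]
  · intro m hm
    rw [lp.single_apply_ne 1 n _ hm, zero_smul]

lemma norm_single_one (n : ℕ) : ‖(lp.single 1 n (1:ℝ) : lp (fun _ : ℕ => ℝ) 1)‖ = 1 := by
  have := lp.norm_single (p := 1) (E := fun _ : ℕ => ℝ) (by simp) n (1:ℝ)
  simpa using this

lemma adjOp_apply' {Y : Type*} [NormedAddCommGroup Y] [NormedSpace ℝ Y]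
    (T : Y →L[ℝ] X) (g : StrongDual ℝ X) (y : Y) :
    ((ContinuousLinearMap.compL ℝ Y X ℝ).flip T) g y = g (T y) := rfl

lemma seqOp_funct_bound (x : ℕ → X) (M : ℝ) (hM : ∀ n, ‖x n‖ ≤ M)
    (g : StrongDual ℝ X) {c : ℝ} (h : ∀ n, |g (x n)| ≤ c)
    (y : lp (fun _ : ℕ => ℝ) 1) : |g (seqOp x M hM y)| ≤ c * ‖y‖ := by
  have hc : 0 ≤ c := le_trans (abs_nonneg _) (h 0)
  have hsum := ellone_summable y x hM
  have hmap : g (seqOp x M hM y) = ∑' n, y n * g (x n) := by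
    show g (∑' n, y n • x n) = _
    rw [g.map_tsum hsum]
    simp [map_smul, smul_eq_mul]
  rw [hmap]
  have hsn : Summable fun n => ‖y n * g (x n)‖ := by
    refine ((ellone_summable_norm y).mul_right c).of_nonneg_of_le
      (fun n => norm_nonneg _) fun n => ?_
    rw [norm_mul]
    exact mul_le_mul_of_nonneg_left (h n) (norm_nonneg _)
  calc |∑' n, y n * g (x n)| ≤ ∑' n, ‖y n * g (x n)‖ := norm_tsum_le_tsum_norm hsn
    _ ≤ ∑' n, c * ‖y n‖ := by
        refine Summable.tsum_le_tsum (fun n => ?_) hsn ((ellone_summable_norm y).mul_left c)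
        rw [norm_mul, mul_comm]
        exact mul_le_mul_of_nonneg_right (h n) (norm_nonneg _)
    _ = c * ∑' n, ‖y n‖ := tsum_mul_left
    _ = c * ‖y‖ := by rw [ellone_norm_sum]

end AuxSec

section Main
variable {X : Type} [NormedAddCommGroup X] [NormedSpace ℝ X] [CompleteSpace X]

lemma hPQ_lem (p : ℝ≥0∞) (hP : ∀ A : Set X, WeaklyPDP p A → RelWeaklyCompact A)
    (Y : Type) [NormedAddCommGroup Y] [NormedSpace ℝ Y] [CompleteSpace Y]
    (T : Y →L[ℝ] X) (hT : PConvergent p (adjOp T)) : WeaklyCompactOp T := by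
  apply hP
  constructor
  · refine (isBounded_closedBall (x := (0:X)) (r := ‖T‖)).subset ?_
    rintro _ ⟨y, hy, rfl⟩
    rw [Metric.mem_closedBall, dist_zero_right] at *
    calc ‖T y‖ ≤ ‖T‖ * ‖y‖ := T.le_opNorm y
      _ ≤ ‖T‖ * 1 := mul_le_mul_of_nonneg_left hy (norm_nonneg _)
      _ = ‖T‖ := mul_one _
  · intro f hf ε hε
    have hnull := hT f hf
    rw [NormNull, Metric.tendsto_atTop] at hnull
    obtain ⟨N, hN⟩ := hnull ε hε
    refine ⟨N, fun n hn a ha => ?_⟩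
    obtain ⟨y, hy, rfl⟩ := ha
    rw [Metric.mem_closedBall, dist_zero_right] at hy
    have h1 : |f n (T y)| = |adjOp T (f n) y| := rfl
    have h2 := hN n hn
    rw [Real.dist_eq, sub_zero, abs_norm] at h2
    calc |f n (T y)| ≤ ‖adjOp T (f n)‖ * ‖y‖ := by
          rw [h1]; exact (adjOp T (f n)).le_opNorm y
      _ ≤ ε * 1 := mul_le_mul h2.le hy (norm_nonneg _) hε.le
      _ = ε := mul_one _

lemma hRP_lem (p : ℝ≥0∞)
    (hR : ∀ T : lp (fun _ : ℕ => ℝ) 1 →L[ℝ] X,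
      PConvergent p (adjOp T) → WeaklyCompactOp T)
    (A : Set X) (hA : WeaklyPDP p A) : RelWeaklyCompact A := by
  obtain ⟨hbd, hunif⟩ := hA
  intro x hx
  obtain ⟨M, hM⟩ := isBounded_iff_forall_norm_le.1 hbd
  have hMx : ∀ n, ‖x n‖ ≤ M := fun n => hM _ (hx n)
  set T := seqOp x M hMx with hT
  have hconv : PConvergent p (adjOp T) := by
    intro f hf
    rw [NormNull, Metric.tendsto_atTop]
    intro ε hε
    obtain ⟨N, hN⟩ := hunif f hf (ε / 2) (by linarith)
    refine ⟨N, fun n hn => ?_⟩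
    rw [Real.dist_eq, sub_zero, abs_norm]
    have hb : ‖adjOp T (f n)‖ ≤ ε / 2 := by
      refine ContinuousLinearMap.opNorm_le_bound _ (by linarith) fun y => ?_
      have : |f n (T y)| ≤ (ε / 2) * ‖y‖ :=
        seqOp_funct_bound x M hMx (f n) (fun m => hN n hn _ (hx m)) y
      exact this
    linarith
  have hwc := hR T hconv
  have hmem : ∀ n, T (lp.single 1 n (1:ℝ)) ∈ ⇑T '' closedBall 0 1 := by
    intro n
    refine ⟨lp.single 1 n (1:ℝ), ?_, rfl⟩
    rw [Metric.mem_closedBall, dist_zero_right, norm_single_one]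
  obtain ⟨a, φ, hφ, hconv'⟩ := hwc (fun n => T (lp.single 1 n (1:ℝ))) hmem
  refine ⟨a, φ, hφ, ?_⟩
  have : (fun k => T (lp.single 1 (φ k) (1:ℝ))) = fun k => x (φ k) := by
    funext k; exact seqOp_single x M hMx (φ k)
  rwa [← this]

end Main

/-- For `1 ≤ p < ∞`, every weakly-`p`-Dunford-Pettis subset of `X` is
relatively weakly compact iff for every Banach space `Y` every operator `T : Y → X`
with `p`-convergent adjoint is weakly compact; moreover it suffices to test with
`Y = ℓ₁`. -/
theorem stmt_4 {X : Type} [NormedAddCommGroup X] [NormedSpace ℝ X] [CompleteSpace X]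
    (p : ℝ≥0∞) (hp : 1 ≤ p) (hp' : p ≠ ⊤) :
    ((∀ A : Set X, WeaklyPDP p A → RelWeaklyCompact A) ↔
      (∀ (Y : Type) [NormedAddCommGroup Y] [NormedSpace ℝ Y] [CompleteSpace Y],
        ∀ T : Y →L[ℝ] X, PConvergent p (adjOp T) → WeaklyCompactOp T)) ∧
    ((∀ A : Set X, WeaklyPDP p A → RelWeaklyCompact A) ↔
      (∀ T : lp (fun _ : ℕ => ℝ) 1 →L[ℝ] X,
        PConvergent p (adjOp T) → WeaklyCompactOp T)) := by
  have hPQ := hPQ_lem (X := X) p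
  have hRP := hRP_lem (X := X) p
  refine ⟨⟨fun hP Y _ _ _ T hT => hPQ hP Y T hT,
    fun hQ => hRP fun T hT => hQ _ T hT⟩,
    ⟨fun hP T hT => hPQ hP _ T hT, hRP⟩⟩
end
end

section
/- Let 1 ≤ p < ∞. A Banach space X has the property that every weakly-p-L-subset of X* is relatively weakly compact (i.e., X has property RDP_p) if and only if for every Banach space Y, every p-convergent operator T: X → Y has weakly compact adjoint (equivalently, is weakly compact). Moreover it suffices to test with Y = ℓ_∞. -/
open Filter Topology Metric NormedSpace Bornology ENNReal

noncomputable section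

section Proof5
variable {X : Type} [NormedAddCommGroup X] [NormedSpace ℝ X]

noncomputable def opOfSeq (f : ℕ → StrongDual ℝ X) (C : ℝ) (hC : ∀ n, ‖f n‖ ≤ C) :
    X →L[ℝ] lp (fun _ : ℕ => ℝ) ⊤ :=
  LinearMap.mkContinuous
    { toFun := fun x => ⟨fun n => f n x, memℓp_infty ⟨C * ‖x‖, by
        rintro - ⟨n, rfl⟩
        calc ‖f n x‖ ≤ ‖f n‖ * ‖x‖ := (f n).le_opNorm x
          _ ≤ C * ‖x‖ := by gcongr; exact hC n⟩⟩
      map_add' := fun x y => Subtype.ext (funext fun n => map_add (f n) x y)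
      map_smul' := fun c x => Subtype.ext (funext fun n => map_smul (f n) c x) }
    C (fun x => lp.norm_le_of_forall_le
      (mul_nonneg (le_trans (norm_nonneg _) (hC 0)) (norm_nonneg x))
      (fun n => by
        calc ‖f n x‖ ≤ ‖f n‖ * ‖x‖ := (f n).le_opNorm x
          _ ≤ C * ‖x‖ := by gcongr; exact hC n))

theorem opOfSeq_apply (f : ℕ → StrongDual ℝ X) (C : ℝ) (hC : ∀ n, ‖f n‖ ≤ C) (x : X) (n : ℕ) :
    (opOfSeq f C hC x : ∀ _ : ℕ, ℝ) n = f n x := rfl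

noncomputable def coordFn (n : ℕ) : StrongDual ℝ (lp (fun _ : ℕ => ℝ) ⊤) :=
  LinearMap.mkContinuous
    { toFun := fun x => x n
      map_add' := fun x y => congrFun (lp.coeFn_add x y) n
      map_smul' := fun c x => congrFun (lp.coeFn_smul c x) n }
    1 (fun x => by rw [one_mul]; exact lp.norm_apply_le_norm ENNReal.top_ne_zero x n)

theorem coordFn_norm (n : ℕ) : ‖coordFn n‖ ≤ 1 :=
  LinearMap.mkContinuous_norm_le _ zero_le_one _


theorem fwd5 (p : ℝ≥0∞) (hR : RDPp p X) {Y : Type*} [NormedAddCommGroup Y]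
    [NormedSpace ℝ Y] (T : X →L[ℝ] Y) (hT : PConvergent p T) :
    WeaklyCompactOp (adjOp T) := by
  apply hR
  constructor
  · rw [isBounded_iff_forall_norm_le]
    refine ⟨‖adjOp T‖, ?_⟩
    rintro - ⟨g, hg, rfl⟩
    calc ‖adjOp T g‖ ≤ ‖adjOp T‖ * ‖g‖ := (adjOp T).le_opNorm g
      _ ≤ ‖adjOp T‖ * 1 := by
          gcongr
          exact mem_closedBall_zero_iff.mp hg
      _ = ‖adjOp T‖ := mul_one _
  · intro x hx ε hε
    obtain ⟨N, hN⟩ := Metric.tendsto_atTop.mp (hT x hx) ε hε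
    refine ⟨N, fun n hn a ha => ?_⟩
    obtain ⟨g, hg, rfl⟩ := ha
    have hTn : ‖T (x n)‖ ≤ ε := by
      have := hN n hn
      rw [Real.dist_eq, sub_zero, abs_of_nonneg (norm_nonneg _)] at this
      exact this.le
    calc |adjOp T g (x n)| = ‖g (T (x n))‖ := by rw [Real.norm_eq_abs]; rfl
      _ ≤ ‖g‖ * ‖T (x n)‖ := g.le_opNorm _
      _ ≤ 1 * ε := by
          have := mem_closedBall_zero_iff.mp hg
          exact mul_le_mul this hTn (norm_nonneg _) zero_le_one
      _ = ε := one_mul _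

theorem bwd5 (p : ℝ≥0∞)
    (h : ∀ T : X →L[ℝ] lp (fun _ : ℕ => ℝ) ⊤,
      PConvergent p T → WeaklyCompactOp (adjOp T)) :
    RDPp p X := by
  intro A hA f hf
  obtain ⟨C, hC⟩ := isBounded_iff_forall_norm_le.mp hA.1
  have hC' : ∀ n, ‖f n‖ ≤ C := fun n => hC _ (hf n)
  set T := opOfSeq f C hC' with hTdef
  have hTf : ∀ n, adjOp T (coordFn n) = f n := fun n => ContinuousLinearMap.ext fun x => rfl
  have hTconv : PConvergent p T := by
    intro x hx
    rw [NormNull, Metric.tendsto_atTop]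
    intro ε hε
    obtain ⟨N, hN⟩ := hA.2 x hx (ε / 2) (half_pos hε)
    refine ⟨N, fun n hn => ?_⟩
    have hle : ‖T (x n)‖ ≤ ε / 2 := by
      refine lp.norm_le_of_forall_le (le_of_lt (half_pos hε)) fun m => ?_
      have := hN n hn (f m) (hf m)
      rw [Real.norm_eq_abs]
      exact this
    rw [Real.dist_eq, sub_zero, abs_of_nonneg (norm_nonneg _)]
    exact lt_of_le_of_lt hle (half_lt_self hε)
  have hWC := h T hTconv
  obtain ⟨a, φ, hφ, hconv⟩ := hWC (fun n => adjOp T (coordFn n))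
    (fun n => ⟨coordFn n, mem_closedBall_zero_iff.mpr (coordFn_norm n), rfl⟩)
  refine ⟨a, φ, hφ, ?_⟩
  have : (fun k => adjOp T (coordFn (φ k))) = fun k => f (φ k) := funext fun k => hTf (φ k)
  rwa [this] at hconv

end Proof5

/-- For `1 ≤ p < ∞`, `X` has property `RDP_p` (every weakly-`p`-L-subset
of `X*` is relatively weakly compact) iff for every Banach space `Y` every
`p`-convergent operator `T : X → Y` has weakly compact adjoint; moreover it suffices
to test with `Y = ℓ_∞`. -/
theorem stmt_5 {X : Type} [NormedAddCommGroup X] [NormedSpace ℝ X] [CompleteSpace X]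
    (p : ℝ≥0∞) (hp : 1 ≤ p) (hp' : p ≠ ⊤) :
    (RDPp p X ↔
      (∀ (Y : Type) [NormedAddCommGroup Y] [NormedSpace ℝ Y] [CompleteSpace Y],
        ∀ T : X →L[ℝ] Y, PConvergent p T → WeaklyCompactOp (adjOp T))) ∧
    (RDPp p X ↔
      (∀ T : X →L[ℝ] lp (fun _ : ℕ => ℝ) ⊤,
        PConvergent p T → WeaklyCompactOp (adjOp T))) := by
  haveI : Fact ((1:ℝ≥0∞) ≤ ⊤) := ⟨le_top⟩
  exact ⟨⟨fun hR Y _ _ _ T hT => fwd5 p hR T hT,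
      fun h => bwd5 p (fun T hT => h (lp (fun _ : ℕ => ℝ) ⊤) T hT)⟩,
    ⟨fun hR T hT => fwd5 p hR T hT, bwd5 p⟩⟩
end
end

section
/- Let 2 < p < ∞. If T: Y → X is an operator between Banach spaces such that J∘T: Y → ℓ_p is compact for every operator J: X → ℓ_p, then T is weakly precompact (i.e., T(B_Y) is weakly precompact: every sequence in T(B_Y) has a weakly Cauchy subsequence). -/
open Filter Topology Metric NormedSpace Bornology ENNReal

noncomputable section

namespace RosAux
open Filter Topology Set


variable {S : Type*}

/-- "Convergent" pair-sequence relative to `C`. -/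
def RConv (A B : ℕ → Set S) (M : Set ℕ) (C : Set S) : Prop :=
  ∀ t ∈ C, {n | n ∈ M ∧ t ∈ A n}.Finite ∨ {n | n ∈ M ∧ t ∈ B n}.Finite

/-- Hereditarily non-convergent relative to `C`. -/
def RGood (A B : ℕ → Set S) (M : Set ℕ) (C : Set S) : Prop :=
  ∀ M', M' ⊆ M → M'.Infinite →
    ∃ t ∈ C, {n | n ∈ M' ∧ t ∈ A n}.Infinite ∧ {n | n ∈ M' ∧ t ∈ B n}.Infinite

variable {A B : ℕ → Set S}

lemma RConv.mono {M M' : Set ℕ} {C : Set S} (h : RConv A B M C) (hM : M' ⊆ M) :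
    RConv A B M' C := by
  intro t ht
  rcases h t ht with h1 | h1
  · exact Or.inl (h1.subset fun n hn => ⟨hM hn.1, hn.2⟩)
  · exact Or.inr (h1.subset fun n hn => ⟨hM hn.1, hn.2⟩)

lemma RGood.mono {M M' : Set ℕ} {C : Set S} (h : RGood A B M C) (hM : M' ⊆ M) :
    RGood A B M' C :=
  fun M'' hsub hinf => h M'' (hsub.trans hM) hinf

lemma rgood_or (M : Set ℕ) (C : Set S) :
    (∃ M', M' ⊆ M ∧ M'.Infinite ∧ RConv A B M' C) ∨ RGood A B M C := by
  by_cases h : RGood A B M C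
  · exact Or.inr h
  · left
    rw [RGood] at h
    push_neg at h
    obtain ⟨M', hsub, hinf, hconv⟩ := h
    refine ⟨M', hsub, hinf, fun t ht => ?_⟩
    by_cases h1 : {n | n ∈ M' ∧ t ∈ A n}.Infinite
    · exact Or.inr (hconv t ht h1)
    · exact Or.inl (Set.not_infinite.1 h1)

lemma multiShrink {𝒞 : Set (Set S)} (h𝒞 : 𝒞.Finite) :
    ∀ M : Set ℕ, M.Infinite →
      ∃ M', M' ⊆ M ∧ M'.Infinite ∧ ∀ C ∈ 𝒞, RConv A B M' C ∨ RGood A B M' C := by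
  refine Set.Finite.induction_on (motive := fun 𝒞 _ => ∀ M : Set ℕ, M.Infinite →
      ∃ M', M' ⊆ M ∧ M'.Infinite ∧ ∀ C ∈ 𝒞, RConv A B M' C ∨ RGood A B M' C) 𝒞 h𝒞 ?_ ?_
  · intro M hM
    exact ⟨M, subset_rfl, hM, fun C hC => absurd hC (Set.notMem_empty C)⟩
  · intro C 𝒞' _ _ IH M hM
    obtain ⟨M1, hM1sub, hM1inf, hM1⟩ := IH M hM
    rcases rgood_or (A := A) (B := B) M1 C with ⟨M2, hsub2, hinf2, hconv⟩ | hgood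
    · refine ⟨M2, hsub2.trans hM1sub, hinf2, fun D hD => ?_⟩
      rcases Set.mem_insert_iff.1 hD with rfl | hD'
      · exact Or.inl hconv
      · rcases hM1 D hD' with h | h
        · exact Or.inl (h.mono hsub2)
        · exact Or.inr (h.mono hsub2)
    · refine ⟨M1, hM1sub, hM1inf, fun D hD => ?_⟩
      rcases Set.mem_insert_iff.1 hD with rfl | hD'
      · exact Or.inr hgood
      · exact hM1 D hD'

lemma auxStep {𝒞 : Set (Set S)} (h𝒞 : 𝒞.Finite) (M : Set ℕ) (hM : M.Infinite) :
    ∃ n ∈ M, ∃ M', M' ⊆ M ∧ M'.Infinite ∧ (∀ x ∈ M', n < x) ∧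
      ∀ C ∈ 𝒞, (RConv A B M' (C ∩ A n) ∨ RGood A B M' (C ∩ A n)) ∧
               (RConv A B M' (C ∩ B n) ∨ RGood A B M' (C ∩ B n)) := by
  obtain ⟨n, hn⟩ := hM.nonempty
  have hM2 : (M ∩ Set.Ioi n).Infinite := by
    have : M \ Set.Iic n ⊆ M ∩ Set.Ioi n := by
      intro x hx; exact ⟨hx.1, by simpa using hx.2⟩
    exact ((hM.diff (Set.finite_Iic n)).mono this)
  obtain ⟨M', hsub, hinf, hP⟩ :=
    multiShrink (A := A) (B := B)
      (𝒞 := ((fun C => C ∩ A n) '' 𝒞) ∪ ((fun C => C ∩ B n) '' 𝒞))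
      ((h𝒞.image _).union (h𝒞.image _)) (M ∩ Set.Ioi n) hM2
  refine ⟨n, hn, M', hsub.trans Set.inter_subset_left, hinf,
    fun x hx => (hsub hx).2, fun C hC => ?_⟩
  exact ⟨hP _ (Or.inl ⟨C, hC, rfl⟩), hP _ (Or.inr ⟨C, hC, rfl⟩)⟩


section Step

variable {S : Type*} {A B : ℕ → Set S}

lemma stepLemma {𝒞 : Set (Set S)} (h𝒞 : 𝒞.Finite) (M : Set ℕ) (hM : M.Infinite)
    (hG : ∀ C ∈ 𝒞, RGood A B M C) :
    ∃ n ∈ M, ∃ M', M' ⊆ M ∧ M'.Infinite ∧ (∀ x ∈ M', n < x) ∧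
      ∀ C ∈ 𝒞, RGood A B M' (C ∩ A n) ∧ RGood A B M' (C ∩ B n) := by
  classical
  -- the state type
  let St := {q : ℕ × Set ℕ // q.1 ∈ M ∧ q.2 ⊆ M ∧ q.2.Infinite ∧ (∀ x ∈ q.2, q.1 < x) ∧
      ∀ C ∈ 𝒞, (RConv A B q.2 (C ∩ A q.1) ∨ RGood A B q.2 (C ∩ A q.1)) ∧
               (RConv A B q.2 (C ∩ B q.1) ∨ RGood A B q.2 (C ∩ B q.1))}
  have exists_next : ∀ q : St, ∃ q' : St, q'.1.1 ∈ q.1.2 ∧ q'.1.2 ⊆ q.1.2 := by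
    rintro ⟨⟨n0, M0⟩, hn0, hM0sub, hM0inf, hlt0, hC0⟩
    obtain ⟨n, hn, M', hsub, hinf, hlt, hP⟩ := auxStep h𝒞 M0 hM0inf
    exact ⟨⟨⟨n, M'⟩, hM0sub hn, hsub.trans hM0sub, hinf, hlt, hP⟩, hn, hsub⟩
  obtain ⟨q0⟩ : Nonempty St := by
    obtain ⟨n, hn, M', hsub, hinf, hlt, hP⟩ := auxStep h𝒞 M hM
    exact ⟨⟨⟨n, M'⟩, hn, hsub, hinf, hlt, hP⟩⟩
  choose next hnext1 hnext2 using exists_next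
  set s : ℕ → St := fun j => next^[j] q0 with hs
  have hsucc : ∀ j, s (j + 1) = next (s j) := by
    intro j; simp [hs, Function.iterate_succ_apply']
  set nn : ℕ → ℕ := fun j => (s j).1.1 with hnn
  set MM : ℕ → Set ℕ := fun j => (s j).1.2 with hMM
  have hmemM : ∀ j, nn j ∈ M := fun j => (s j).2.1
  have hMsubM : ∀ j, MM j ⊆ M := fun j => (s j).2.2.1
  have hMinf : ∀ j, (MM j).Infinite := fun j => (s j).2.2.2.1
  have hltj : ∀ j, ∀ x ∈ MM j, nn j < x := fun j => (s j).2.2.2.2.1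
  have hdich : ∀ j, ∀ C ∈ 𝒞,
      (RConv A B (MM j) (C ∩ A (nn j)) ∨ RGood A B (MM j) (C ∩ A (nn j))) ∧
      (RConv A B (MM j) (C ∩ B (nn j)) ∨ RGood A B (MM j) (C ∩ B (nn j))) :=
    fun j => (s j).2.2.2.2.2
  have hsuccmem : ∀ j, nn (j + 1) ∈ MM j := by
    intro j; show (↑(s (j+1)) : ℕ × Set ℕ).1 ∈ MM j; rw [hsucc j]; exact hnext1 (s j)
  have hsuccsub : ∀ j, MM (j + 1) ⊆ MM j := by
    intro j; show (↑(s (j+1)) : ℕ × Set ℕ).2 ⊆ (↑(s j) : ℕ × Set ℕ).2; rw [hsucc j]; exact hnext2 (s j)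
  have hmono : ∀ i j, i ≤ j → MM j ⊆ MM i := by
    intro i j hij
    induction j with
    | zero => cases Nat.le_zero.1 hij; exact subset_rfl
    | succ k IH =>
      rcases Nat.le_succ_iff_eq_or_le.1 hij with rfl | h
      · exact subset_rfl
      · exact (hsuccsub k).trans (IH h)
  have hnstrict : StrictMono nn :=
    strictMono_nat_of_lt_succ fun j => hltj j _ (hsuccmem j)
  have htail : ∀ i j, i < j → nn j ∈ MM i := by
    intro i j hij
    obtain ⟨k, rfl⟩ := Nat.exists_eq_add_of_lt hij
    exact hmono i (i + k) (Nat.le_add_right _ _) (hsuccmem (i + k))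
  -- badness finiteness
  have hbad : ∀ C ∈ 𝒞, ∀ (D : ℕ → Set S), (D = A ∨ D = B) →
      {j | RConv A B (MM j) (C ∩ D (nn j))}.Finite := by
    intro C hC D hD
    by_contra hinf
    have hJ : {j | RConv A B (MM j) (C ∩ D (nn j))}.Infinite := fun hfin => hinf hfin
    set J := {j | RConv A B (MM j) (C ∩ D (nn j))} with hJdef
    have hN'sub : nn '' J ⊆ M := by rintro _ ⟨j, _, rfl⟩; exact hmemM j
    have hN'inf : (nn '' J).Infinite := hJ.image (hnstrict.injective.injOn)
    obtain ⟨t, ht, hIA, hIB⟩ := hG C hC (nn '' J) hN'sub hN'inf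
    -- pick j ∈ J with t ∈ D (nn j)
    have hDinf : {m | m ∈ nn '' J ∧ t ∈ D m}.Infinite := by
      rcases hD with rfl | rfl
      · exact hIA
      · exact hIB
    obtain ⟨m0, hm0⟩ := hDinf.nonempty
    obtain ⟨j, hjJ, rfl⟩ := hm0.1
    have htD : t ∈ C ∩ D (nn j) := ⟨ht, hm0.2⟩
    -- both sets over MM j are infinite
    have hAinf : {m | m ∈ MM j ∧ t ∈ A m}.Infinite := by
      have hsubs : {m | m ∈ nn '' J ∧ t ∈ A m} \ Set.Iic (nn j) ⊆ {m | m ∈ MM j ∧ t ∈ A m} := by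
        rintro m ⟨⟨⟨i, _, rfl⟩, htm⟩, hgt⟩
        have : nn j < nn i := by simpa using hgt
        exact ⟨htail j i (hnstrict.lt_iff_lt.1 this), htm⟩
      exact (hIA.diff (Set.finite_Iic _)).mono hsubs
    have hBinf : {m | m ∈ MM j ∧ t ∈ B m}.Infinite := by
      have hsubs : {m | m ∈ nn '' J ∧ t ∈ B m} \ Set.Iic (nn j) ⊆ {m | m ∈ MM j ∧ t ∈ B m} := by
        rintro m ⟨⟨⟨i, _, rfl⟩, htm⟩, hgt⟩
        have : nn j < nn i := by simpa using hgt
        exact ⟨htail j i (hnstrict.lt_iff_lt.1 this), htm⟩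
      exact (hIB.diff (Set.finite_Iic _)).mono hsubs
    rcases hjJ t htD with hfin | hfin
    · exact hAinf hfin
    · exact hBinf hfin
  have hBadFin : (⋃ C ∈ 𝒞, ({j | RConv A B (MM j) (C ∩ A (nn j))} ∪
      {j | RConv A B (MM j) (C ∩ B (nn j))})).Finite :=
    Set.Finite.biUnion h𝒞 fun C hC =>
      ((hbad C hC A (Or.inl rfl)).union (hbad C hC B (Or.inr rfl)))
  obtain ⟨j, hj⟩ := (hBadFin.infinite_compl).nonempty
  refine ⟨nn j, hmemM j, MM j, hMsubM j, hMinf j, hltj j, fun C hC => ?_⟩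
  have hjA : ¬ RConv A B (MM j) (C ∩ A (nn j)) := by
    intro hcv; exact hj (Set.mem_biUnion hC (Or.inl hcv))
  have hjB : ¬ RConv A B (MM j) (C ∩ B (nn j)) := by
    intro hcv; exact hj (Set.mem_biUnion hC (Or.inr hcv))
  exact ⟨(hdich j C hC).1.resolve_left hjA, (hdich j C hC).2.resolve_left hjB⟩

end Step

section Core

variable {S : Type*} (A B : ℕ → Set S)

/-- Pattern sets generated by a (reversed) list of indices. -/
def Pats : List ℕ → Set (Set S)
  | [] => {Set.univ}
  | n :: l => ⋃ C ∈ Pats l, {C ∩ A n, C ∩ B n}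

lemma pats_finite : ∀ l : List ℕ, (Pats A B l).Finite
  | [] => Set.finite_singleton _
  | n :: l => (pats_finite l).biUnion fun C _ => (Set.finite_singleton _).insert _

variable {A B}

lemma biInter_range_succ (k : ℕ) (f : ℕ → Set S) :
    ⋂ i ∈ Finset.range (k + 1), f i = (⋂ i ∈ Finset.range k, f i) ∩ f k := by
  ext t
  simp only [Set.mem_iInter, Set.mem_inter_iff, Finset.mem_range]
  constructor
  · intro h; exact ⟨fun i hi => h i (Nat.lt_succ_of_lt hi), h k (Nat.lt_succ_self k)⟩
  · rintro ⟨h1, h2⟩ i hi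
    rcases Nat.lt_succ_iff_lt_or_eq.1 hi with h | rfl
    · exact h1 i h
    · exact h2

lemma rosCore {M₀ : Set ℕ} (hM₀ : M₀.Infinite) (hg : RGood A B M₀ Set.univ) :
    ∃ m : ℕ → ℕ, StrictMono m ∧ ∀ (k : ℕ) (v : ℕ → Bool),
      ∃ t : S, ∀ i < k, (v i = true → t ∈ B (m i)) ∧ (v i = false → t ∈ A (m i)) := by
  classical
  let St := {q : List ℕ × Set ℕ // q.2 ⊆ M₀ ∧ q.2.Infinite ∧
      (∀ x ∈ q.2, ∀ y ∈ q.1, y < x) ∧ ∀ P ∈ Pats A B q.1, RGood A B q.2 P}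
  have exists_next : ∀ q : St, ∃ q' : St,
      (∃ n ∈ q.1.2, q'.1.1 = n :: q.1.1) ∧ q'.1.2 ⊆ q.1.2 := by
    rintro ⟨⟨l, Mc⟩, hsubM, hinf, hord, hgood⟩
    obtain ⟨n, hn, M', hsub, hinf', hlt, hP⟩ :=
      stepLemma (pats_finite A B l) Mc hinf hgood
    refine ⟨⟨⟨n :: l, M'⟩, hsub.trans hsubM, hinf', ?_, ?_⟩, ⟨n, hn, rfl⟩, hsub⟩
    · rintro x hx y hy
      rcases List.mem_cons.1 hy with rfl | hy'
      · exact hlt x hx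
      · exact hord x (hsub hx) y hy'
    · intro P hP'
      simp only [Pats, Set.mem_iUnion] at hP'
      obtain ⟨C, hC, hPC⟩ := hP'
      rcases hPC with rfl | hPC
      · exact (hP C hC).1
      · rw [Set.mem_singleton_iff] at hPC
        subst hPC
        exact (hP C hC).2
  have hq0good : ∀ P ∈ Pats A B ([] : List ℕ), RGood A B M₀ P := by
    intro P hP
    rw [Pats, Set.mem_singleton_iff] at hP
    subst hP
    exact hg
  let q0 : St := ⟨⟨[], M₀⟩, subset_rfl, hM₀, by simp, hq0good⟩
  choose next hnext1 hnext2 using exists_next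
  set s : ℕ → St := fun j => next^[j] q0 with hs
  have hsucc : ∀ j, s (j + 1) = next (s j) := by
    intro j; simp [hs, Function.iterate_succ_apply']
  set ml : ℕ → List ℕ := fun j => (s j).1.1 with hml
  set MM : ℕ → Set ℕ := fun j => (s j).1.2 with hMM
  -- chosen element at step j
  have hcons : ∀ j, ∃ n ∈ MM j, ml (j + 1) = n :: ml j := by
    intro j
    show ∃ n ∈ MM j, (↑(s (j+1)) : List ℕ × Set ℕ).1 = n :: ml j
    rw [hsucc j]; exact hnext1 (s j)
  have hsub : ∀ j, MM (j + 1) ⊆ MM j := by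
    intro j
    show (↑(s (j+1)) : List ℕ × Set ℕ).2 ⊆ (↑(s j) : List ℕ × Set ℕ).2
    rw [hsucc j]; exact hnext2 (s j)
  set m : ℕ → ℕ := fun k => (ml (k + 1)).headI with hm
  have hmlval : ∀ k, ml (k + 1) = m k :: ml k ∧ m k ∈ MM k := by
    intro k
    obtain ⟨n, hn, hnl⟩ := hcons k
    have : m k = n := by rw [hm]; simp [hnl]
    rw [this]
    exact ⟨hnl, hn⟩
  have hinfM : ∀ j, (MM j).Infinite := fun j => (s j).2.2.1
  have hordM : ∀ j, ∀ x ∈ MM j, ∀ y ∈ ml j, y < x := fun j => (s j).2.2.2.1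
  have hgoodM : ∀ j, ∀ P ∈ Pats A B (ml j), RGood A B (MM j) P := fun j => (s j).2.2.2.2
  have hmono : StrictMono m := by
    apply strictMono_nat_of_lt_succ
    intro k
    have h1 : m (k + 1) ∈ MM (k + 1) := (hmlval (k + 1)).2
    have h2 : m k ∈ ml (k + 1) := by rw [(hmlval k).1]; exact List.mem_cons_self
    exact hordM (k + 1) _ h1 _ h2
  refine ⟨m, hmono, ?_⟩
  intro k v
  -- the pattern is in Pats (ml k)
  have hpat : ∀ k, (⋂ i ∈ Finset.range k, (if v i then B (m i) else A (m i))) ∈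
      Pats A B (ml k) := by
    intro k
    induction k with
    | zero =>
      simp only [Finset.range_zero]
      have : ⋂ i ∈ (∅ : Finset ℕ), (if v i then B (m i) else A (m i)) = Set.univ := by
        simp
      rw [this]
      show Set.univ ∈ Pats A B []
      rw [Pats]
      exact Set.mem_singleton _
    | succ n IH =>
      rw [biInter_range_succ, (hmlval n).1, Pats]
      rw [Set.mem_iUnion]
      refine ⟨_, Set.mem_iUnion.2 ⟨IH, ?_⟩⟩
      cases hv : v n
      · left; simp [hv]
      · right; simp [hv]
  obtain ⟨t, ht, -, -⟩ := hgoodM k _ (hpat k) (MM k) subset_rfl (hinfM k)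
  refine ⟨t, fun i hi => ?_⟩
  have := Set.mem_iInter.1 ht i
  rw [Set.mem_iInter] at this
  have ht' := this (Finset.mem_range.2 hi)
  constructor
  · intro hv; rw [hv] at ht'; simpa using ht'
  · intro hv; rw [hv] at ht'; simpa using ht'

end Core

section Real

variable {S : Type*}

/-- Rosenthal-type extraction: a uniformly bounded family of functions with no
pointwise-convergent subsequence admits a subsequence with independent level-set pairs. -/
lemma rosenthal (F : ℕ → S → ℝ) (Mb : ℝ) (hbd : ∀ n t, |F n t| ≤ Mb)
    (hyp : ∀ φ : ℕ → ℕ, StrictMono φ →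
      ∃ t : S, ¬ ∃ l : ℝ, Tendsto (fun k => F (φ k) t) atTop (𝓝 l)) :
    ∃ (m : ℕ → ℕ) (q r : ℝ), StrictMono m ∧ q < r ∧
      ∀ (k : ℕ) (v : ℕ → Bool), ∃ t : S, ∀ i < k,
        (v i = true → r < F (m i) t) ∧ (v i = false → F (m i) t < q) := by
  classical
  -- Step 1: find a rational pair with hereditary non-convergence
  have step1 : ∃ (q r : ℚ), (q : ℝ) < r ∧ ∃ M : Set ℕ, M.Infinite ∧
      RGood (fun n => {t | F n t < q}) (fun n => {t | (r : ℝ) < F n t}) M Set.univ := by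
    by_contra hcon
    push_neg at hcon
    -- for every valid pair and every infinite M there is a convergent shrink
    have hshrink : ∀ (q r : ℚ), (q : ℝ) < r → ∀ M : Set ℕ, M.Infinite →
        ∃ M', M' ⊆ M ∧ M'.Infinite ∧
          RConv (fun n => {t | F n t < q}) (fun n => {t | (r : ℝ) < F n t}) M' Set.univ := by
      intro q r hqr M hM
      rcases rgood_or (A := fun n => {t | F n t < (q:ℝ)})
        (B := fun n => {t | (r : ℝ) < F n t}) M Set.univ with ⟨M', h1, h2, h3⟩ | hg
      · exact ⟨M', h1, h2, h3⟩
      · exact absurd hg (hcon q r hqr M hM)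
    set e : ℕ → ℚ × ℚ := fun i => (Denumerable.eqv (ℚ × ℚ)).symm i with he
    -- build nested sets
    have hstep : ∀ (i : ℕ) (q : {M : Set ℕ // M.Infinite}), ∃ q' : {M : Set ℕ // M.Infinite},
        q'.1 ⊆ q.1 ∧ (((e i).1 : ℝ) < ((e i).2 : ℝ) →
          RConv (fun n => {t | F n t < (e i).1}) (fun n => {t | ((e i).2 : ℝ) < F n t})
            q'.1 Set.univ) := by
      intro i ⟨M, hM⟩
      by_cases hv : ((e i).1 : ℝ) < ((e i).2 : ℝ)
      · obtain ⟨M', h1, h2, h3⟩ := hshrink (e i).1 (e i).2 hv M hM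
        exact ⟨⟨M', h2⟩, h1, fun _ => h3⟩
      · exact ⟨⟨M, hM⟩, subset_rfl, fun h => absurd h hv⟩
    choose nextM hnextM1 hnextM2 using hstep
    set Ms : ℕ → {M : Set ℕ // M.Infinite} :=
      fun i => Nat.rec ⟨Set.univ, Set.infinite_univ⟩ (fun j q => nextM j q) i with hMs
    have hMs_succ : ∀ i, Ms (i + 1) = nextM i (Ms i) := fun i => rfl
    have hMs_sub : ∀ i, (Ms (i + 1)).1 ⊆ (Ms i).1 := by
      intro i; rw [hMs_succ]; exact hnextM1 i (Ms i)
    have hMs_mono : ∀ i j, i ≤ j → (Ms j).1 ⊆ (Ms i).1 := by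
      intro i j hij
      induction j with
      | zero => cases Nat.le_zero.1 hij; exact subset_rfl
      | succ k IH =>
        rcases Nat.le_succ_iff_eq_or_le.1 hij with rfl | h
        · exact subset_rfl
        · exact (hMs_sub k).trans (IH h)
    -- diagonal sequence
    have hdiag : ∀ (i : ℕ) (a : ℕ), ∃ b ∈ (Ms i).1, a < b := fun i a => (Ms i).2.exists_gt a
    set d : ℕ → ℕ := fun i =>
      Nat.rec (sInf (Ms 0).1) (fun j x => sInf {b | b ∈ (Ms (j + 1)).1 ∧ x < b}) i with hd
    have hd0 : d 0 ∈ (Ms 0).1 := Nat.sInf_mem ((Ms 0).2.nonempty)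
    have hdsucc : ∀ i, d (i + 1) ∈ (Ms (i + 1)).1 ∧ d i < d (i + 1) := by
      intro i
      have hne : {b | b ∈ (Ms (i + 1)).1 ∧ d i < b}.Nonempty := by
        obtain ⟨b, hb1, hb2⟩ := hdiag (i + 1) (d i)
        exact ⟨b, hb1, hb2⟩
      exact Nat.sInf_mem hne
    have hdstrict : StrictMono d := strictMono_nat_of_lt_succ fun i => (hdsucc i).2
    have hdmem : ∀ i j, i ≤ j → d j ∈ (Ms i).1 := by
      intro i j hij
      induction j with
      | zero => cases Nat.le_zero.1 hij; exact hd0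
      | succ k IH =>
        rcases Nat.le_succ_iff_eq_or_le.1 hij with rfl | h
        · exact (hdsucc k).1
        · exact hMs_mono i (k + 1) (Nat.le_succ_of_le h) (hdsucc k).1
    -- apply the hypothesis to the diagonal
    obtain ⟨t, ht⟩ := hyp d hdstrict
    set a : ℕ → ℝ := fun k => F (d k) t with ha
    have hble : IsBoundedUnder (· ≤ ·) atTop a :=
      isBoundedUnder_of ⟨Mb, fun k => (abs_le.1 (hbd (d k) t)).2⟩
    have hbge : IsBoundedUnder (· ≥ ·) atTop a :=
      isBoundedUnder_of ⟨-Mb, fun k => (abs_le.1 (hbd (d k) t)).1⟩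
    have hl_lt : liminf a atTop < limsup a atTop := by
      rcases lt_or_eq_of_le (liminf_le_limsup hble hbge) with h | h
      · exact h
      · exact absurd ⟨limsup a atTop, tendsto_of_liminf_eq_limsup h rfl hble hbge⟩ ht
    obtain ⟨q, hq1, hq2⟩ := exists_rat_btwn hl_lt
    obtain ⟨r, hr1, hr2⟩ := exists_rat_btwn hq2
    have hfreq1 : {k | a k < q}.Infinite := by
      rw [← Nat.frequently_atTop_iff_infinite]
      exact frequently_lt_of_liminf_lt hble.isCoboundedUnder_ge hq1
    have hfreq2 : {k | (r : ℝ) < a k}.Infinite := by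
      rw [← Nat.frequently_atTop_iff_infinite]
      exact frequently_lt_of_lt_limsup hbge.isCoboundedUnder_le hr2
    set i : ℕ := Denumerable.eqv (ℚ × ℚ) (q, r) with hi
    have hei : e i = (q, r) := by rw [he, hi]; simp
    have hconv := hnextM2 i (Ms i) (by rw [hei]; exact hr1)
    rw [← hMs_succ i] at hconv
    have hAinf : {n | n ∈ (Ms (i + 1)).1 ∧ t ∈ {u | F n u < ((e i).1 : ℝ)}}.Infinite := by
      have hsubs : d '' ({k | a k < (q : ℝ)} \ Set.Iic i) ⊆
          {n | n ∈ (Ms (i + 1)).1 ∧ t ∈ {u | F n u < ((e i).1 : ℝ)}} := by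
        rintro _ ⟨k, ⟨hk1, hk2⟩, rfl⟩
        refine ⟨hdmem (i + 1) k (by simpa using hk2), ?_⟩
        rw [hei]
        exact hk1
      exact ((hfreq1.diff (Set.finite_Iic i)).image hdstrict.injective.injOn).mono hsubs
    have hBinf : {n | n ∈ (Ms (i + 1)).1 ∧ t ∈ {u | ((e i).2 : ℝ) < F n u}}.Infinite := by
      have hsubs : d '' ({k | (r : ℝ) < a k} \ Set.Iic i) ⊆
          {n | n ∈ (Ms (i + 1)).1 ∧ t ∈ {u | ((e i).2 : ℝ) < F n u}} := by
        rintro _ ⟨k, ⟨hk1, hk2⟩, rfl⟩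
        refine ⟨hdmem (i + 1) k (by simpa using hk2), ?_⟩
        rw [hei]
        exact hk1
      exact ((hfreq2.diff (Set.finite_Iic i)).image hdstrict.injective.injOn).mono hsubs
    rcases hconv t (Set.mem_univ t) with hfin | hfin
    · exact hAinf hfin
    · exact hBinf hfin
  obtain ⟨q, r, hqr, M, hMinf, hMgood⟩ := step1
  obtain ⟨m, hmono, hind⟩ := rosCore hMinf hMgood
  refine ⟨m, q, r, hmono, hqr, ?_⟩
  intro k v
  obtain ⟨t, ht⟩ := hind k v
  refine ⟨t, fun i hi => ?_⟩
  exact ⟨fun hv => (ht i hi).1 hv, fun hv => (ht i hi).2 hv⟩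

end Real


section Analytic


def sg (b : Bool) : ℝ := if b then 1 else -1

lemma sg_abs (b : Bool) : |sg b| = 1 := by cases b <;> simp [sg]

lemma sg_mul_self (b : Bool) : sg b * sg b = 1 := by cases b <;> norm_num [sg]

lemma sg_not (b : Bool) : sg (!b) = -sg b := by cases b <;> norm_num [sg]

variable {X : Type*} [NormedAddCommGroup X] [NormedSpace ℝ X]

lemma exists_bilinear_form (x' : ℕ → X) (C : ℝ) (hC : 0 ≤ C)
    (Gf : (ℕ → Bool) → X →L[ℝ] ℝ) (hGn : ∀ ω, ‖Gf ω‖ ≤ C)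
    (hGv : ∀ ω i, (Gf ω) (x' i) = sg (ω i)) :
    ∃ Bf : X →ₗ[ℝ] X →ₗ[ℝ] ℝ,
      (∀ u v, |Bf u v| ≤ C * C * ‖u‖ * ‖v‖) ∧
      (∀ u v, Bf u v = Bf v u) ∧
      (∀ u, 0 ≤ Bf u u) ∧
      (∀ a b, Bf (x' a) (x' b) = if a = b then 1 else 0) := by
  classical
  set ex : (N : ℕ) → (Fin N → Bool) → (ℕ → Bool) :=
    fun N w i => if h : i < N then w ⟨i, h⟩ else true with hex
  set bb : ℕ → (X × X) → ℝ := fun N z =>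
    ((2 : ℝ) ^ N)⁻¹ * ∑ w : Fin N → Bool, (Gf (ex N w) z.1) * (Gf (ex N w) z.2) with hbb
  set c : X × X → ℝ := fun z => C * C * ‖z.1‖ * ‖z.2‖ with hc
  have hpow : ∀ N : ℕ, (0:ℝ) < 2 ^ N := fun N => by positivity
  have hcard : ∀ N : ℕ, (Fintype.card (Fin N → Bool) : ℝ) = 2 ^ N := by
    intro N; rw [Fintype.card_fun]; simp
  have hbbK : ∀ N z, |bb N z| ≤ c z := by
    intro N z
    have hterm : ∀ w : Fin N → Bool, |(Gf (ex N w) z.1) * (Gf (ex N w) z.2)| ≤ c z := by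
      intro w
      rw [abs_mul, hc]
      have h1 : |(Gf (ex N w)) z.1| ≤ C * ‖z.1‖ :=
        ((Gf (ex N w)).le_opNorm z.1).trans
          (mul_le_mul_of_nonneg_right (hGn _) (norm_nonneg _))
      have h2 : |(Gf (ex N w)) z.2| ≤ C * ‖z.2‖ :=
        ((Gf (ex N w)).le_opNorm z.2).trans
          (mul_le_mul_of_nonneg_right (hGn _) (norm_nonneg _))
      calc |(Gf (ex N w)) z.1| * |(Gf (ex N w)) z.2| ≤ (C * ‖z.1‖) * (C * ‖z.2‖) :=
            mul_le_mul h1 h2 (abs_nonneg _) (by positivity)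
        _ = C * C * ‖z.1‖ * ‖z.2‖ := by ring
    have hsum : |∑ w : Fin N → Bool, (Gf (ex N w) z.1) * (Gf (ex N w) z.2)| ≤ 2 ^ N * c z := by
      refine (Finset.abs_sum_le_sum_abs _ _).trans ?_
      calc ∑ w : Fin N → Bool, |(Gf (ex N w) z.1) * (Gf (ex N w) z.2)|
          ≤ ∑ _w : Fin N → Bool, c z := Finset.sum_le_sum fun w _ => hterm w
        _ = (Fintype.card (Fin N → Bool) : ℝ) * c z := by
            rw [Finset.sum_const, nsmul_eq_mul]; simp
        _ = 2 ^ N * c z := by rw [hcard]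
    rw [hbb]
    calc |((2:ℝ) ^ N)⁻¹ * ∑ w : Fin N → Bool, (Gf (ex N w) z.1) * (Gf (ex N w) z.2)|
        = ((2:ℝ) ^ N)⁻¹ * |∑ w : Fin N → Bool, (Gf (ex N w) z.1) * (Gf (ex N w) z.2)| := by
          rw [abs_mul, abs_of_pos (inv_pos.2 (hpow N))]
      _ ≤ ((2:ℝ)^N)⁻¹ * (2 ^ N * c z) :=
          mul_le_mul_of_nonneg_left hsum (inv_nonneg.2 (hpow N).le)
      _ = c z := by field_simp
  set K : Set ((X × X) → ℝ) := {g | ∀ z, g z ∈ Set.Icc (-(c z)) (c z)} with hK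
  have hKcomp : IsCompact K := isCompact_pi_infinite fun z => isCompact_Icc
  have hmemK : ∀ N, bb N ∈ K := by
    intro N z
    have := hbbK N z
    rw [abs_le] at this
    exact ⟨neg_le.1 (neg_le_neg this.1 |>.trans_eq (neg_neg _)), this.2⟩
  have hle : Filter.map bb atTop ≤ Filter.principal K :=
    le_principal_iff.2 (mem_map.2 (Eventually.of_forall hmemK))
  obtain ⟨β, hβK, hβcl⟩ := hKcomp.exists_clusterPt hle
  have key : ∀ s : Set ((X × X) → ℝ), IsClosed s → (∀ᶠ N in atTop, bb N ∈ s) → β ∈ s := by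
    intro s hs hev
    by_contra hβs
    have h1 : sᶜ ∈ 𝓝 β := hs.isOpen_compl.mem_nhds hβs
    have h2 : s ∈ Filter.map bb atTop := mem_map.2 hev
    obtain ⟨g, hg1, hg2⟩ :=
      hβcl.nonempty_of_mem (inter_mem (mem_inf_of_left h1) (mem_inf_of_right h2))
    exact hg1 hg2
  -- additivity in the first variable
  have haddl : ∀ u u' v, β (u + u', v) = β (u, v) + β (u', v) := by
    intro u u' v
    refine key {g | g (u + u', v) = g (u, v) + g (u', v)}
      (isClosed_eq (continuous_apply (u + u', v))
        ((continuous_apply (u, v)).add (continuous_apply (u', v))))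
      (Eventually.of_forall fun N => ?_)
    show bb N (u + u', v) = bb N (u, v) + bb N (u', v)
    rw [hbb]
    simp only
    rw [← mul_add, ← Finset.sum_add_distrib]
    congr 1
    refine Finset.sum_congr rfl fun w _ => ?_
    rw [map_add]
    ring
  have hsmull : ∀ (r : ℝ) u v, β (r • u, v) = r * β (u, v) := by
    intro r u v
    refine key {g | g (r • u, v) = r * g (u, v)}
      (isClosed_eq (continuous_apply (r • u, v)) (continuous_const.mul (continuous_apply (u, v))))
      (Eventually.of_forall fun N => ?_)
    show bb N (r • u, v) = r * bb N (u, v)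
    rw [hbb]
    simp only
    have hterm : ∀ w : Fin N → Bool,
        (Gf (ex N w)) (r • u) * (Gf (ex N w)) v = r * ((Gf (ex N w)) u * (Gf (ex N w)) v) := by
      intro w
      rw [map_smul, smul_eq_mul]
      ring
    rw [Finset.sum_congr rfl fun w _ => hterm w, ← Finset.mul_sum]
    ring
  have hsymm : ∀ u v, β (u, v) = β (v, u) := by
    intro u v
    refine key {g | g (u, v) = g (v, u)}
      (isClosed_eq (continuous_apply (u, v)) (continuous_apply (v, u)))
      (Eventually.of_forall fun N => ?_)
    show bb N (u, v) = bb N (v, u)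
    rw [hbb]
    simp only
    congr 1
    exact Finset.sum_congr rfl fun w _ => mul_comm _ _
  have hposd : ∀ u, 0 ≤ β (u, u) := by
    intro u
    refine key {g | 0 ≤ g (u, u)}
      (isClosed_le continuous_const (continuous_apply (u, u)))
      (Eventually.of_forall fun N => ?_)
    show (0:ℝ) ≤ bb N (u, u)
    rw [hbb]
    simp only
    have : (0:ℝ) ≤ ∑ w : Fin N → Bool, (Gf (ex N w)) u * (Gf (ex N w)) u :=
      Finset.sum_nonneg fun w _ => mul_self_nonneg _
    positivity
  have horth : ∀ a b, β (x' a, x' b) = if a = b then 1 else 0 := by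
    intro a b
    refine key {g | g (x' a, x' b) = if a = b then 1 else 0}
      (isClosed_eq (continuous_apply (x' a, x' b)) continuous_const) ?_
    rw [eventually_atTop]
    refine ⟨max a b + 1, fun N hN => ?_⟩
    have ha : a < N := lt_of_le_of_lt (le_max_left a b) hN
    have hb : b < N := lt_of_le_of_lt (le_max_right a b) hN
    have hval : ∀ (w : Fin N → Bool) (i : ℕ) (h : i < N),
        (Gf (ex N w)) (x' i) = sg (w ⟨i, h⟩) := by
      intro w i h
      rw [hGv]
      congr 1
      rw [hex]
      simp only
      rw [dif_pos h]
    show bb N (x' a, x' b) = if a = b then 1 else 0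
    rw [hbb]
    simp only
    by_cases hab : a = b
    · subst hab
      rw [if_pos rfl]
      have : ∀ w : Fin N → Bool, (Gf (ex N w)) (x' a) * (Gf (ex N w)) (x' a) = 1 := by
        intro w
        rw [hval w a ha, sg_mul_self]
      rw [Finset.sum_congr rfl fun w _ => this w, Finset.sum_const, nsmul_eq_mul, mul_one]
      rw [← hcard N]
      simp [hcard N]
    · rw [if_neg hab]
      have hsum0 : ∑ w : Fin N → Bool, (Gf (ex N w)) (x' a) * (Gf (ex N w)) (x' b) = 0 := by
        have hne : (⟨a, ha⟩ : Fin N) ≠ ⟨b, hb⟩ := by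
          intro h
          exact hab (congrArg Fin.val h)
        refine Finset.sum_involution
          (fun w _ => Function.update w ⟨a, ha⟩ (!(w ⟨a, ha⟩))) ?_ ?_ (fun w _ => Finset.mem_univ _) ?_
        · intro w _
          have e1 := hval w a ha
          have e2 := hval w b hb
          have e3 := hval (Function.update w ⟨a, ha⟩ (!(w ⟨a, ha⟩))) a ha
          have e4 := hval (Function.update w ⟨a, ha⟩ (!(w ⟨a, ha⟩))) b hb
          simp only [Function.update_self, Function.update_of_ne hne.symm, sg_not] at e3 e4
          simp only [e1, e2, e3, e4]
          ring
        · intro w _ _ heq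
          have h2 := congrFun heq ⟨a, ha⟩
          simp only [Function.update_self] at h2
          cases h : w ⟨a, ha⟩ <;> rw [h] at h2 <;> simp at h2
        · intro w _
          funext j
          by_cases hj : j = ⟨a, ha⟩
          · subst hj
            simp only [Function.update_self, Bool.not_not]
          · simp only [Function.update_of_ne hj]
      rw [hsum0, mul_zero]
  -- package into a bilinear map
  set Bf : X →ₗ[ℝ] X →ₗ[ℝ] ℝ := LinearMap.mk₂ ℝ (fun u v => β (u, v))
    (fun u u' v => haddl u u' v)
    (fun r u v => by show β (r • u, v) = r • β (u, v); rw [hsmull, smul_eq_mul])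
    (fun u v v' => by
      show β (u, v + v') = β (u, v) + β (u, v')
      rw [hsymm u (v + v'), haddl, hsymm v u, hsymm v' u])
    (fun r u v => by
      show β (u, r • v) = r • β (u, v)
      rw [hsymm u (r • v), hsmull, hsymm v u, smul_eq_mul]) with hBf
  have hBfapp : ∀ u v, Bf u v = β (u, v) := fun u v => rfl
  refine ⟨Bf, ?_, ?_, ?_, ?_⟩
  · intro u v
    rw [hBfapp]
    have := hβK (u, v)
    rw [Set.mem_Icc] at this
    rw [abs_le]
    constructor
    · exact neg_le.1 (by simpa using neg_le_neg this.1 |>.trans_eq (neg_neg _)) |>.trans_eq rfl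
    · exact this.2
  · intro u v
    rw [hBfapp, hBfapp]
    exact hsymm u v
  · intro u
    rw [hBfapp]
    exact hposd u
  · intro a b
    rw [hBfapp]
    exact horth a b

lemma bessel (Bf : X →ₗ[ℝ] X →ₗ[ℝ] ℝ) (hsym : ∀ u v, Bf u v = Bf v u)
    (hpos : ∀ u, 0 ≤ Bf u u) (x' : ℕ → X)
    (horth : ∀ a b, Bf (x' a) (x' b) = if a = b then 1 else 0)
    (u : X) (k : ℕ) :
    ∑ i ∈ Finset.range k, (Bf u (x' i)) ^ 2 ≤ Bf u u := by
  classical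
  set cc : ℕ → ℝ := fun i => Bf u (x' i) with hcc
  set w : X := ∑ i ∈ Finset.range k, cc i • x' i with hw
  have h1 : Bf u w = ∑ i ∈ Finset.range k, cc i ^ 2 := by
    rw [hw, map_sum]
    refine Finset.sum_congr rfl fun i _ => ?_
    rw [map_smul, smul_eq_mul]
    show cc i * cc i = cc i ^ 2
    ring
  have h2 : Bf w u = ∑ i ∈ Finset.range k, cc i ^ 2 := by
    rw [hsym w u]
    exact h1
  have hBfw : Bf w = ∑ i ∈ Finset.range k, cc i • Bf (x' i) := by
    rw [hw, map_sum]
    exact Finset.sum_congr rfl fun i _ => by rw [map_smul]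
  have h3 : Bf w w = ∑ i ∈ Finset.range k, cc i ^ 2 := by
    rw [hBfw, LinearMap.sum_apply]
    refine Finset.sum_congr rfl fun i hi => ?_
    rw [LinearMap.smul_apply, smul_eq_mul]
    have hxiw : Bf (x' i) w = cc i := by
      rw [hw, map_sum]
      have hterm : ∀ j ∈ Finset.range k, Bf (x' i) (cc j • x' j) = if i = j then cc j else 0 := by
        intro j _
        rw [map_smul, smul_eq_mul, horth]
        by_cases h : i = j <;> simp [h]
      rw [Finset.sum_congr rfl hterm, Finset.sum_ite_eq, if_pos hi]
    rw [hxiw]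
    ring
  have h4 := hpos (u - w)
  have hexp : Bf (u - w) (u - w) = Bf u u - Bf u w - Bf w u + Bf w w := by
    rw [map_sub (Bf (u - w)), map_sub Bf, LinearMap.sub_apply, LinearMap.sub_apply]
    ring
  rw [hexp, h1, h2, h3] at h4
  linarith


lemma lincomb_eq_sum_range {x' : ℕ → X} (l : ℕ →₀ ℝ) {k : ℕ}
    (hk : ∀ i ∈ l.support, i < k) :
    Finsupp.linearCombination ℝ x' l = ∑ i ∈ Finset.range k, l i • x' i := by
  rw [Finsupp.linearCombination_apply, Finsupp.sum]
  refine Finset.sum_subset (fun i hi => Finset.mem_range.2 (hk i hi)) ?_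
  intro i _ hnot
  rw [Finsupp.notMem_support_iff.1 hnot, zero_smul]

lemma exists_sign_functionals (x' : ℕ → X) (δ : ℝ) (hδ : 0 < δ)
    (hl1 : ∀ (k : ℕ) (b : ℕ → ℝ),
      δ * ∑ i ∈ Finset.range k, |b i| ≤ ‖∑ i ∈ Finset.range k, b i • x' i‖) :
    ∀ ω : ℕ → Bool, ∃ G : X →L[ℝ] ℝ, ‖G‖ ≤ δ⁻¹ ∧ ∀ i, G (x' i) = sg (ω i) := by
  classical
  have habs_sum : ∀ (l : ℕ →₀ ℝ) (k : ℕ), (∀ i ∈ l.support, i < k) →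
      ∑ i ∈ Finset.range k, |l i| ≤ δ⁻¹ * ‖Finsupp.linearCombination ℝ x' l‖ := by
    intro l k hk
    rw [lincomb_eq_sum_range l hk]
    have h1 := hl1 k (fun i => l i)
    rw [inv_mul_eq_div, le_div_iff₀ hδ]
    calc (∑ i ∈ Finset.range k, |l i|) * δ = δ * ∑ i ∈ Finset.range k, |l i| := mul_comm _ _
      _ ≤ _ := h1
  have li : LinearIndependent ℝ x' := by
    rw [linearIndependent_iff]
    intro l hl
    set k := l.support.sup id + 1 with hkdef
    have hk : ∀ i ∈ l.support, i < k := fun i hi =>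
      Nat.lt_succ_of_le (Finset.le_sup (f := id) hi)
    have h2 := habs_sum l k hk
    rw [hl, norm_zero, mul_zero] at h2
    refine DFunLike.ext _ _ fun i => ?_
    show l i = 0
    by_contra hne
    have hmem : i ∈ l.support := Finsupp.mem_support_iff.2 hne
    have hnn : ∀ j ∈ Finset.range k, (0:ℝ) ≤ |l j| := fun j _ => abs_nonneg _
    have hzero : ∀ j ∈ Finset.range k, |l j| = 0 :=
      (Finset.sum_eq_zero_iff_of_nonneg hnn).1
        (le_antisymm h2 (Finset.sum_nonneg hnn))
    exact hne (abs_eq_zero.1 (hzero i (Finset.mem_range.2 (hk i hmem))))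
  intro ω
  set W := Submodule.span ℝ (Set.range x') with hW
  set L : W →ₗ[ℝ] ℝ :=
    (Finsupp.linearCombination ℝ (fun i => sg (ω i))).comp li.repr with hL
  have hLdef : ∀ w : W,
      L w = Finsupp.linearCombination ℝ (fun i => sg (ω i)) (li.repr w) := fun w => rfl
  have hLval : ∀ (w : W) (k : ℕ), (∀ i ∈ (li.repr w).support, i < k) →
      L w = ∑ i ∈ Finset.range k, (li.repr w) i * sg (ω i) := by
    intro w k hk
    rw [hLdef, Finsupp.linearCombination_apply, Finsupp.sum]
    refine Finset.sum_subset (fun i hi => Finset.mem_range.2 (hk i hi)) ?_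
    intro i _ hnot
    rw [Finsupp.notMem_support_iff.1 hnot, zero_smul]
  have hbound : ∀ w : W, ‖L w‖ ≤ δ⁻¹ * ‖w‖ := by
    intro w
    set l := li.repr w with hl
    set k := l.support.sup id + 1 with hkdef
    have hk : ∀ i ∈ l.support, i < k := fun i hi =>
      Nat.lt_succ_of_le (Finset.le_sup (f := id) hi)
    have h1 : ‖L w‖ ≤ ∑ i ∈ Finset.range k, |l i| := by
      rw [hLval w k hk]
      refine (Finset.abs_sum_le_sum_abs _ _).trans ?_
      refine Finset.sum_le_sum fun i _ => ?_
      rw [abs_mul, sg_abs, mul_one]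
    have h2 := habs_sum l k hk
    rw [li.linearCombination_repr w] at h2
    exact h1.trans h2
  set Lc : W →L[ℝ] ℝ := LinearMap.mkContinuous L δ⁻¹ hbound with hLc
  obtain ⟨g, hg1, hg2⟩ := exists_extension_norm_eq W Lc
  refine ⟨g, ?_, ?_⟩
  · rw [hg2]
    exact LinearMap.mkContinuous_norm_le L (inv_nonneg.2 hδ.le) hbound
  · intro i
    have hmem : x' i ∈ W := Submodule.subset_span (Set.mem_range_self i)
    have h := hg1 ⟨x' i, hmem⟩
    have hc : ((⟨x' i, hmem⟩ : W) : X) = x' i := rfl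
    rw [hc] at h
    rw [h, hLc, LinearMap.mkContinuous_apply, hLdef]
    have hrepr : li.repr ⟨x' i, hmem⟩ = Finsupp.single i 1 :=
      li.repr_eq_single i _ rfl
    rw [hrepr, Finsupp.linearCombination_single, one_smul]


end Analytic
end RosAux

set_option maxHeartbeats 2000000 in
/-- For `2 < p < ∞`, if `T : Y → X` is an operator between Banach spaces
such that `J ∘ T : Y → ℓ_p` is compact for every operator `J : X → ℓ_p`, then `T`
is weakly precompact. -/
theorem stmt_6 {X Y : Type*} [NormedAddCommGroup X] [NormedSpace ℝ X] [CompleteSpace X]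
    [NormedAddCommGroup Y] [NormedSpace ℝ Y] [CompleteSpace Y]
    (p : ℝ≥0∞) (hp : 2 < p) (hp' : p ≠ ⊤) [Fact (1 ≤ p)] (T : Y →L[ℝ] X)
    (h : ∀ J : X →L[ℝ] lp (fun _ : ℕ => ℝ) p, IsCompactOperator (J.comp T)) :
    WeaklyPrecompactOp T := by
  classical
  unfold WeaklyPrecompactOp WeaklyPrecompact
  intro x hx
  by_contra hcon
  push_neg at hcon
  choose y hymem hyTx using hx
  have hyb : ∀ n, ‖y n‖ ≤ 1 := fun n => by
    have := hymem n; rwa [Metric.mem_closedBall, dist_zero_right] at this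
  have hxn : ∀ n, ‖x n‖ ≤ ‖T‖ := fun n => by
    rw [← hyTx n]
    calc ‖T (y n)‖ ≤ ‖T‖ * ‖y n‖ := T.le_opNorm _
      _ ≤ ‖T‖ * 1 := mul_le_mul_of_nonneg_left (hyb n) (norm_nonneg T)
      _ = ‖T‖ := mul_one _
  set S := {f : StrongDual ℝ X // ‖f‖ ≤ 1} with hS
  set F : ℕ → S → ℝ := fun n t => t.1 (x n) with hF
  have hbd : ∀ n t, |F n t| ≤ ‖T‖ := by
    intro n t
    calc |t.1 (x n)| ≤ ‖t.1‖ * ‖x n‖ := t.1.le_opNorm _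
      _ ≤ 1 * ‖T‖ := mul_le_mul t.2 (hxn n) (norm_nonneg _) zero_le_one
      _ = ‖T‖ := one_mul _
  have hyp : ∀ φ : ℕ → ℕ, StrictMono φ →
      ∃ t : S, ¬ ∃ l : ℝ, Tendsto (fun k => F (φ k) t) atTop (𝓝 l) := by
    intro φ hφ
    have h1 := hcon φ hφ
    unfold WeaklyCauchySeq at h1
    push_neg at h1
    obtain ⟨f, hf⟩ := h1
    set c : ℝ := max 1 ‖f‖ with hc
    have hc1 : (1:ℝ) ≤ c := le_max_left _ _
    have hcpos : (0:ℝ) < c := lt_of_lt_of_le one_pos hc1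
    have hc0 : c ≠ 0 := hcpos.ne'
    refine ⟨⟨c⁻¹ • f, ?_⟩, ?_⟩
    · rw [norm_smul, norm_inv, Real.norm_of_nonneg hcpos.le]
      rw [inv_mul_le_iff₀ hcpos, mul_one]
      exact le_max_right _ _
    · rintro ⟨l, hl⟩
      refine hf (c * l) ?_
      have h3 : (fun k => c * ((c⁻¹ • f) (x (φ k)))) = fun k => f (x (φ k)) := by
        funext k
        have h5 : (c⁻¹ • f) (x (φ k)) = c⁻¹ * f (x (φ k)) := rfl
        rw [h5, ← mul_assoc, mul_inv_cancel₀ hc0, one_mul]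
      have h4 := hl.const_mul c
      rw [h3] at h4
      exact h4
  obtain ⟨m, q, r, hmmono, hqr, hind⟩ := RosAux.rosenthal F ‖T‖ hbd hyp
  set δ : ℝ := (r - q) / 2 with hδdef
  have hδ : 0 < δ := by rw [hδdef]; linarith
  set x' : ℕ → X := fun k => x (m k) with hx'
  -- the ℓ₁ lower bound
  have hl1 : ∀ (k : ℕ) (b : ℕ → ℝ),
      δ * ∑ i ∈ Finset.range k, |b i| ≤ ‖∑ i ∈ Finset.range k, b i • x' i‖ := by
    intro k b
    set v : ℕ → Bool := fun i => decide (0 ≤ b i) with hv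
    obtain ⟨t₁, ht₁⟩ := hind k v
    obtain ⟨t₂, ht₂⟩ := hind k (fun i => !(v i))
    set g : StrongDual ℝ X := t₁.1 - t₂.1 with hg
    have hgval : ∀ i, g (x' i) = t₁.1 (x' i) - t₂.1 (x' i) := fun i => rfl
    have hterm : ∀ i < k, 2 * δ * |b i| ≤ b i * g (x' i) := by
      intro i hi
      by_cases hbi : 0 ≤ b i
      · have hv1 : v i = true := by rw [hv]; simp [hbi]
        have h1 : r < t₁.1 (x' i) := (ht₁ i hi).1 hv1
        have h2 : t₂.1 (x' i) < q := (ht₂ i hi).2 (by rw [hv1]; rfl)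
        have hge : 2 * δ ≤ g (x' i) := by
          rw [hgval, hδdef]; linarith
        calc 2 * δ * |b i| = (2 * δ) * b i := by rw [abs_of_nonneg hbi]
          _ ≤ g (x' i) * b i := mul_le_mul_of_nonneg_right hge hbi
          _ = b i * g (x' i) := mul_comm _ _
      · push_neg at hbi
        have hv1 : v i = false := by rw [hv]; simp [hbi, not_le.2 hbi]
        have h1 : t₁.1 (x' i) < q := (ht₁ i hi).2 hv1
        have h2 : r < t₂.1 (x' i) := (ht₂ i hi).1 (by rw [hv1]; rfl)
        have hle : g (x' i) ≤ -(2 * δ) := by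
          rw [hgval, hδdef]; linarith
        calc 2 * δ * |b i| = (2 * δ) * (-b i) := by rw [abs_of_neg hbi]
          _ = (-(2 * δ)) * b i := by ring
          _ ≤ g (x' i) * b i := by
              have := mul_le_mul_of_nonpos_right hle hbi.le
              linarith [this]
          _ = b i * g (x' i) := mul_comm _ _
    have hsum : 2 * δ * ∑ i ∈ Finset.range k, |b i|
        ≤ g (∑ i ∈ Finset.range k, b i • x' i) := by
      rw [map_sum, Finset.mul_sum]
      refine Finset.sum_le_sum fun i hi => ?_
      rw [map_smul, smul_eq_mul]
      exact hterm i (Finset.mem_range.1 hi)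
    have hgn : ‖g‖ ≤ 2 := by
      rw [hg]
      calc ‖t₁.1 - t₂.1‖ ≤ ‖t₁.1‖ + ‖t₂.1‖ := norm_sub_le _ _
        _ ≤ 1 + 1 := add_le_add t₁.2 t₂.2
        _ = 2 := by norm_num
    have hnorm : g (∑ i ∈ Finset.range k, b i • x' i)
        ≤ 2 * ‖∑ i ∈ Finset.range k, b i • x' i‖ := by
      refine (le_abs_self _).trans ?_
      refine (g.le_opNorm _).trans ?_
      exact mul_le_mul_of_nonneg_right hgn (norm_nonneg _)
    linarith
  -- sign functionals and the bilinear form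
  choose Gf hGn hGv using RosAux.exists_sign_functionals x' δ hδ hl1
  obtain ⟨Bf, hBd, hBsym, hBpos, hBorth⟩ :=
    RosAux.exists_bilinear_form x' δ⁻¹ (inv_nonneg.2 hδ.le) Gf hGn hGv
  have hbes : ∀ (u : X) (k : ℕ), ∑ i ∈ Finset.range k, (Bf u (x' i)) ^ 2
      ≤ δ⁻¹ * δ⁻¹ * ‖u‖ * ‖u‖ :=
    fun u k => (RosAux.bessel Bf hBsym hBpos x' hBorth u k).trans
      ((le_abs_self _).trans (hBd u u))
  have hp0 : p ≠ 0 := by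
    intro h0
    rw [h0] at hp
    exact absurd hp (by simp)
  have hmem : ∀ u : X, Memℓp (fun i => Bf u (x' i)) p := by
    intro u
    have h2 : Memℓp (fun i => Bf u (x' i)) 2 := by
      apply memℓp_gen
      have h2t : ((2:ℝ≥0∞)).toReal = (2:ℝ) := by simp
      have heq : (fun i => ‖Bf u (x' i)‖ ^ ((2:ℝ≥0∞)).toReal)
          = fun i => (Bf u (x' i)) ^ 2 := by
        funext i
        rw [h2t, Real.rpow_two, Real.norm_eq_abs, sq_abs]
      rw [heq]
      refine summable_of_sum_range_le (fun i => sq_nonneg _) fun n => hbes u n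
    exact h2.of_exponent_ge hp.le
  -- the operator J
  set Jl : X →ₗ[ℝ] lp (fun _ : ℕ => ℝ) p :=
    { toFun := fun u => ⟨fun i => Bf u (x' i), hmem u⟩
      map_add' := by
        intro u u'
        apply lp.ext
        funext i
        show Bf (u + u') (x' i) = Bf u (x' i) + Bf u' (x' i)
        rw [map_add, LinearMap.add_apply]
      map_smul' := by
        intro c u
        apply lp.ext
        funext i
        show Bf (c • u) (x' i) = c * Bf u (x' i)
        rw [map_smul, LinearMap.smul_apply, smul_eq_mul] } with hJl
  have hJlval : ∀ (u : X) (i : ℕ), (Jl u : ℕ → ℝ) i = Bf u (x' i) := fun u i => rfl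
  have hJcont : Continuous Jl := by
    apply Jl.continuous_of_seq_closed_graph
    intro u a blim h1 h2
    apply lp.ext
    funext i
    have hc1 : Tendsto (fun n => (Jl (u n) : ℕ → ℝ) i) atTop (𝓝 ((blim : ℕ → ℝ) i)) := by
      have hb : ∀ n, ‖(Jl (u n) : ℕ → ℝ) i - (blim : ℕ → ℝ) i‖
          ≤ ‖Jl (u n) - blim‖ := by
        intro n
        have := lp.norm_apply_le_norm hp0 (Jl (u n) - blim) i
        rwa [lp.coeFn_sub, Pi.sub_apply] at this
      have h0 : Tendsto (fun n => ‖Jl (u n) - blim‖) atTop (𝓝 0) := by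
        have := (tendsto_iff_norm_sub_tendsto_zero).1 h2
        simpa using this
      have := squeeze_zero_norm hb h0
      have h4 := this.add_const ((blim : ℕ → ℝ) i)
      simpa using h4
    have hc2 : Tendsto (fun n => (Jl (u n) : ℕ → ℝ) i) atTop (𝓝 ((Jl a : ℕ → ℝ) i)) := by
      rw [hJlval]
      have hb : ∀ n, ‖Bf (u n) (x' i) - Bf a (x' i)‖
          ≤ (δ⁻¹ * δ⁻¹ * ‖x' i‖) * ‖u n - a‖ := by
        intro n
        have hsub : Bf (u n) (x' i) - Bf a (x' i) = Bf (u n - a) (x' i) := by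
          rw [map_sub, LinearMap.sub_apply]
        rw [hsub, Real.norm_eq_abs]
        calc |Bf (u n - a) (x' i)| ≤ δ⁻¹ * δ⁻¹ * ‖u n - a‖ * ‖x' i‖ := hBd _ _
          _ = (δ⁻¹ * δ⁻¹ * ‖x' i‖) * ‖u n - a‖ := by ring
      have h0 : Tendsto (fun n => (δ⁻¹ * δ⁻¹ * ‖x' i‖) * ‖u n - a‖) atTop (𝓝 0) := by
        have h5 : Tendsto (fun n => ‖u n - a‖) atTop (𝓝 0) := by
          have := (tendsto_iff_norm_sub_tendsto_zero).1 h1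
          simpa using this
        have := h5.const_mul (δ⁻¹ * δ⁻¹ * ‖x' i‖)
        simpa using this
      have h6 := squeeze_zero_norm hb h0
      have h7 := h6.add_const (Bf a (x' i))
      have h8 : (fun n => Bf (u n) (x' i) - Bf a (x' i) + Bf a (x' i))
          = fun n => (Jl (u n) : ℕ → ℝ) i := by
        funext n
        rw [hJlval]
        ring
      rw [h8] at h7
      simpa using h7
    exact tendsto_nhds_unique hc1 hc2
  set J : X →L[ℝ] lp (fun _ : ℕ => ℝ) p := ⟨Jl, hJcont⟩ with hJ
  have hJval : ∀ (k i : ℕ), (J (x' k) : ℕ → ℝ) i = if k = i then 1 else 0 := by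
    intro k i
    have : (J (x' k) : ℕ → ℝ) i = Bf (x' k) (x' i) := rfl
    rw [this, hBorth]
  obtain ⟨K, hKc, hKsub⟩ := (h J).image_closedBall_subset_compact 1
  have hvK : ∀ k, J (x' k) ∈ K := by
    intro k
    apply hKsub
    refine ⟨y (m k), hymem (m k), ?_⟩
    show J (T (y (m k))) = J (x' k)
    rw [hyTx (m k)]
  obtain ⟨aℓ, -, ψ, hψ, hconv⟩ := hKc.tendsto_subseq hvK
  have hcauchy : CauchySeq fun k => J (x' (ψ k)) := hconv.cauchySeq
  rw [Metric.cauchySeq_iff] at hcauchy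
  obtain ⟨N, hN⟩ := hcauchy 1 one_pos
  have hdist := hN N le_rfl (N + 1) (Nat.le_succ N)
  have hge : (1:ℝ) ≤ dist (J (x' (ψ N))) (J (x' (ψ (N + 1)))) := by
    rw [dist_eq_norm]
    set w1 := J (x' (ψ N)) - J (x' (ψ (N + 1))) with hw1
    have hne : ψ (N + 1) ≠ ψ N := fun hh => (Nat.succ_ne_self N) (hψ.injective hh)
    have hval2 : (w1 : ℕ → ℝ) (ψ N) = 1 := by
      have h11 : (w1 : ℕ → ℝ) (ψ N)
          = Bf (x' (ψ N)) (x' (ψ N)) - Bf (x' (ψ (N + 1))) (x' (ψ N)) := rfl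
      rw [h11, hBorth, hBorth, if_pos rfl, if_neg hne]
      norm_num
    have hcoord := lp.norm_apply_le_norm hp0 w1 (ψ N)
    rw [hval2] at hcoord
    simpa using hcoord
  linarith
end
end
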